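/- arXiv:2303.06953 — 3 statements merged into one kernel-verified Lean document; each statement's English description precedes it below -/
import Mathlib

section
/- Let I be a stable monomial ideal of the exterior algebra E = K⟨e_1,...,e_n⟩. Then I has linear quotients with respect to the reverse degree lexicographic order on its minimal generators, and for every u ∈ G(I), set(u) = {1, 2, ..., m(u)}, where m(u) = max supp(u). -/
open ExteriorAlgebra

/-- The `i`-th basis monomial `e_i` of the exterior algebra `E = K⟨e_1,…,e_n⟩`. -/
noncomputable def e (K : Type) [Field K] {n : ℕ} (i : Fin n) :
    ExteriorAlgebra K (Fin n → K) :=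
  ι K (Pi.single i 1)

/-- The monomial `e_μ = e_{i_1} ∧ ⋯ ∧ e_{i_d}` for `μ = {i_1 < ⋯ < i_d}`. -/
noncomputable def eMon (K : Type) [Field K] {n : ℕ} (μ : Finset (Fin n)) :
    ExteriorAlgebra K (Fin n → K) :=
  ((μ.sort (· ≤ ·)).map (e K)).prod

/-- The ideal `(u_1, …, u_j)` generated by the monomials `u_i = e_{μ_i}`, `i ≤ j`. -/
noncomputable def Iupto (K : Type) [Field K] {n r : ℕ}
    (μs : Fin r → Finset (Fin n)) (j : Fin r) :
    Ideal (ExteriorAlgebra K (Fin n → K)) :=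
  Ideal.span {v | ∃ i, i ≤ j ∧ v = eMon K (μs i)}

/-- The ideal `(u_1, …, u_{j-1})` generated by the monomials `u_i = e_{μ_i}`, `i < j`. -/
noncomputable def Ibelow (K : Type) [Field K] {n r : ℕ}
    (μs : Fin r → Finset (Fin n)) (j : Fin r) :
    Ideal (ExteriorAlgebra K (Fin n → K)) :=
  Ideal.span {v | ∃ i, i < j ∧ v = eMon K (μs i)}

/-- `set(u_j) = {k : e_k ∈ (u_1,…,u_{j-1}) : (u_j)}`. -/
noncomputable def setIdx (K : Type) [Field K] {n r : ℕ}
    (μs : Fin r → Finset (Fin n)) (j : Fin r) : Set (Fin n) :=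
  {k | e K k * eMon K (μs j) ∈ Ibelow K μs j}

/-- The monomial ideal generated by `u_1, …, u_r` has linear quotients with
respect to this order: each colon ideal `(u_1,…,u_{j-1}) : (u_j)` is generated
by a subset of the variables `e_1, …, e_n`. -/
def LinearQuotients (K : Type) [Field K] {n r : ℕ}
    (μs : Fin r → Finset (Fin n)) : Prop :=
  ∀ j : Fin r, ∃ S : Finset (Fin n),
    {f : ExteriorAlgebra K (Fin n → K) | f * eMon K (μs j) ∈ Ibelow K μs j}
      = (Ideal.span {v | ∃ k ∈ S, v = e K k} : Set (ExteriorAlgebra K (Fin n → K)))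

/-- `g(e_ν) = u_j`: `j` is the least index with `e_ν ∈ (u_1, …, u_j)`. -/
noncomputable def IsDecomp (K : Type) [Field K] {n r : ℕ}
    (μs : Fin r → Finset (Fin n)) (ν : Finset (Fin n)) (j : Fin r) : Prop :=
  eMon K ν ∈ Iupto K μs j ∧ ∀ i, i < j → eMon K ν ∉ Iupto K μs i

namespace Stable

variable {K : Type} [Field K] {n : ℕ}

abbrev EA (K : Type) [Field K] (n : ℕ) := ExteriorAlgebra K (Fin n → K)

noncomputable def P (K : Type) [Field K] {n : ℕ} (l : List (Fin n)) : EA K n :=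
  (l.map (e K)).prod

lemma eMon_def (S : Finset (Fin n)) : eMon K S = P K (S.sort (· ≤ ·)) := rfl

@[simp] lemma P_nil : P K ([] : List (Fin n)) = 1 := rfl

lemma P_cons (a : Fin n) (l : List (Fin n)) : P K (a :: l) = e K a * P K l := by
  simp [P, List.prod_cons]

lemma P_append (l l' : List (Fin n)) : P K (l ++ l') = P K l * P K l' := by
  simp [P, List.prod_append]

lemma e_mul_self (i : Fin n) : e K i * e K i = 0 := ι_sq_zero _

lemma e_anticomm (i j : Fin n) : e K i * e K j = -(e K j * e K i) := by
  rw [eq_neg_iff_add_eq_zero]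
  exact ι_add_mul_swap (R := K) (M := Fin n → K) (Pi.single i 1) (Pi.single j 1)

def IsSign (ε : K) : Prop := ε = 1 ∨ ε = -1

lemma IsSign.one : IsSign (1 : K) := Or.inl rfl

lemma IsSign.neg {ε : K} (h : IsSign ε) : IsSign (-ε) := by
  rcases h with h | h <;> simp [IsSign, h]

lemma IsSign.mul {ε δ : K} (h : IsSign ε) (h' : IsSign δ) : IsSign (ε * δ) := by
  rcases h with h | h <;> rcases h' with h' | h' <;> simp [IsSign, h, h']

lemma IsSign.mul_self {ε : K} (h : IsSign ε) : ε * ε = 1 := by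
  rcases h with h | h <;> simp [h]

lemma IsSign.smul_cancel {ε : K} (h : IsSign ε) (x : EA K n) : ε • ε • x = x := by
  rw [_root_.smul_smul, h.mul_self, one_smul]

lemma P_perm {l l' : List (Fin n)} (h : l.Perm l') :
    ∃ ε : K, IsSign ε ∧ P K l = ε • P K l' := by
  induction h with
  | nil => exact ⟨1, IsSign.one, by simp⟩
  | cons a _ ih =>
      obtain ⟨ε, hε, he⟩ := ih
      exact ⟨ε, hε, by rw [P_cons, P_cons, he, mul_smul_comm]⟩
  | swap a b l =>
      refine ⟨-1, IsSign.one.neg, ?_⟩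
      rw [P_cons, P_cons, P_cons, P_cons, ← mul_assoc, ← mul_assoc,
        e_anticomm b a]
      simp
  | trans _ _ ih1 ih2 =>
      obtain ⟨ε, hε, he⟩ := ih1
      obtain ⟨δ, hδ, hd⟩ := ih2
      exact ⟨ε * δ, hε.mul hδ, by rw [he, hd, smul_smul]⟩

lemma e_mul_P_of_mem {l : List (Fin n)} {k : Fin n} (h : k ∈ l) :
    e K k * P K l = 0 := by
  induction l with
  | nil => simp at h
  | cons a t ih =>
      rw [P_cons, ← mul_assoc]
      rcases List.mem_cons.mp h with rfl | h
      · rw [e_mul_self]; simp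
      · rw [e_anticomm, neg_mul, mul_assoc, ih h, mul_zero, neg_zero]

end Stable

namespace Stable
variable {K : Type} [Field K] {n : ℕ}

lemma eMon_mul_disjoint {S S' : Finset (Fin n)} (h : Disjoint S S') :
    ∃ ε : K, IsSign ε ∧ eMon K S * eMon K S' = ε • eMon K (S ∪ S') := by
  have hperm : ((S.sort (· ≤ ·)) ++ (S'.sort (· ≤ ·))).Perm ((S ∪ S').sort (· ≤ ·)) := by
    rw [← Multiset.coe_eq_coe]
    rw [← Finset.disjUnion_eq_union S S' h]
    simp [Finset.disjUnion, ← Multiset.coe_add, Finset.sort_eq]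
  obtain ⟨ε, hε, he⟩ := P_perm (K := K) hperm
  exact ⟨ε, hε, by rw [eMon_def, eMon_def, ← P_append, he, ← eMon_def]⟩

lemma e_mul_eMon_not_mem {k : Fin n} {S : Finset (Fin n)} (h : k ∉ S) :
    ∃ ε : K, IsSign ε ∧ e K k * eMon K S = ε • eMon K (insert k S) := by
  have hperm : (k :: S.sort (· ≤ ·)).Perm ((insert k S).sort (· ≤ ·)) := by
    rw [← Multiset.coe_eq_coe]
    simp [Finset.insert_val, Multiset.ndinsert_of_notMem h, ← Multiset.cons_coe,
      Finset.sort_eq]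
  obtain ⟨ε, hε, he⟩ := P_perm (K := K) hperm
  exact ⟨ε, hε, by rw [eMon_def, ← P_cons, he, ← eMon_def]⟩

lemma e_mul_eMon_mem {k : Fin n} {S : Finset (Fin n)} (h : k ∈ S) :
    e K k * eMon K S = 0 :=
  e_mul_P_of_mem (by simpa using h)

@[simp] lemma eMon_empty : eMon K (∅ : Finset (Fin n)) = 1 := by
  rw [eMon_def]; simp

@[simp] lemma eMon_singleton (k : Fin n) : eMon K ({k} : Finset (Fin n)) = e K k := by
  rw [eMon_def, Finset.sort_singleton]
  simp [P, List.prod_cons]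

lemma eMon_dvd {μ ν : Finset (Fin n)} (h : μ ⊆ ν) :
    ∃ w : EA K n, eMon K ν = w * eMon K μ := by
  obtain ⟨ε, hε, he⟩ := eMon_mul_disjoint (K := K) (Finset.sdiff_disjoint : Disjoint (ν \ μ) μ)
  rw [Finset.sdiff_union_of_subset h] at he
  refine ⟨ε • eMon K (ν \ μ), ?_⟩
  rw [smul_mul_assoc, he, hε.smul_cancel]

end Stable

namespace Stable
variable {K : Type} [Field K] {n : ℕ}

noncomputable def sgn (K : Type) [Field K] {n : ℕ} (i : Fin n) (S : Finset (Fin n)) : K :=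
  (-1) ^ (S.filter (· < i)).card

noncomputable def aOp (i : Fin n) : (Finset (Fin n) →₀ K) →ₗ[K] (Finset (Fin n) →₀ K) :=
  Finsupp.lsum K fun S =>
    if i ∈ S then 0 else sgn K i S • Finsupp.lsingle (insert i S)

lemma aOp_single (i : Fin n) (S : Finset (Fin n)) (c : K) :
    aOp (K := K) i (Finsupp.single S c) =
      if i ∈ S then 0 else sgn K i S • Finsupp.single (insert i S) c := by
  rw [aOp, Finsupp.lsum_single]
  split <;> simp

lemma sgn_insert {i j : Fin n} {S : Finset (Fin n)} (hj : j ∉ S) :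
    sgn K i (insert j S) = (if j < i then -1 else 1) * sgn K i S := by
  rw [sgn, sgn, Finset.filter_insert]
  split
  · rw [Finset.card_insert_of_notMem (fun h => hj (Finset.mem_of_mem_filter _ h)), pow_succ]
    ring
  · rw [one_mul]

lemma aOp_sq (i : Fin n) : aOp (K := K) i ∘ₗ aOp i = 0 := by
  apply Finsupp.lhom_ext
  intro S c
  rw [LinearMap.comp_apply, aOp_single, LinearMap.zero_apply]
  by_cases hi : i ∈ S
  · rw [if_pos hi, map_zero]
  · rw [if_neg hi, map_smul, aOp_single, if_pos (Finset.mem_insert_self i S), smul_zero]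

lemma aOp_aOp (i j : Fin n) :
    aOp (K := K) i ∘ₗ aOp j + aOp j ∘ₗ aOp i = 0 := by
  by_cases hij : i = j
  · subst hij
    rw [aOp_sq, add_zero]
  apply Finsupp.lhom_ext
  intro S c
  simp only [LinearMap.add_apply, LinearMap.comp_apply, LinearMap.zero_apply, aOp_single]
  by_cases hi : i ∈ S <;> by_cases hj : j ∈ S
  · rw [if_pos hi, if_pos hj, map_zero, map_zero, add_zero]
  · rw [if_pos hi, if_neg hj, map_zero, map_smul, aOp_single,
      if_pos (Finset.mem_insert_of_mem hi), smul_zero, add_zero]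
  · rw [if_neg hi, if_pos hj, map_zero, map_smul, aOp_single,
      if_pos (Finset.mem_insert_of_mem hj), smul_zero, zero_add]
  · have h1 : i ∉ insert j S := by simp [Finset.mem_insert, hij, hi]
    have h2 : j ∉ insert i S := by simp [Finset.mem_insert, Ne.symm hij, hj]
    rw [if_neg hi, if_neg hj, map_smul, map_smul, aOp_single, aOp_single,
      if_neg h1, if_neg h2, Finset.insert_comm, smul_smul, smul_smul, ← add_smul,
      sgn_insert hj, sgn_insert hi]
    rcases lt_or_gt_of_ne hij with h | h
    · rw [if_neg (not_lt_of_gt h), if_pos h]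
      ring_nf
      simp
    · rw [if_pos h, if_neg (not_lt_of_gt h)]
      ring_nf
      simp

noncomputable def aMap : (Fin n → K) →ₗ[K] Module.End K (Finset (Fin n) →₀ K) where
  toFun v := ∑ i, v i • aOp i
  map_add' x y := by simp [add_smul, Finset.sum_add_distrib]
  map_smul' c x := by simp [smul_smul, Finset.smul_sum]

lemma aOp_mul_add_aOp_mul (i j : Fin n) :
    (aOp (K := K) i : Module.End K _) * aOp j + aOp j * aOp i = 0 :=
  aOp_aOp i j

lemma aMap_sq_zero (v : Fin n → K) : aMap (K := K) v * aMap v = 0 := by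
  show (∑ i, v i • aOp (K := K) i) * (∑ j, v j • aOp j) = 0
  rw [Finset.sum_mul_sum]
  rw [← Finset.sum_product']
  apply Finset.sum_ninvolution (g := fun p => (p.2, p.1))
  · intro ⟨i, j⟩
    show (v i • aOp i) * (v j • aOp j) + (v j • aOp j) * (v i • aOp i) = 0
    rw [smul_mul_smul_comm, smul_mul_smul_comm, mul_comm (v j) (v i), ← smul_add,
      aOp_mul_add_aOp_mul, smul_zero]
  · intro ⟨i, j⟩ hf
    by_cases hij : i = j
    · exfalso
      apply hf
      subst hij
      show (v i • aOp i) * (v i • aOp i) = 0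
      rw [smul_mul_smul_comm]
      have : (aOp (K := K) i : Module.End K _) * aOp i = 0 := aOp_sq i
      rw [this, smul_zero]
    · simp only [ne_eq, Prod.ext_iff]
      intro h
      exact hij (h.2.symm ▸ rfl)
  · intro a; exact Finset.mem_univ _
  · intro a; rfl

end Stable

namespace Stable
variable {K : Type} [Field K] {n : ℕ}

noncomputable def Phi (K : Type) [Field K] (n : ℕ) :
    ExteriorAlgebra K (Fin n → K) →ₐ[K] Module.End K (Finset (Fin n) →₀ K) :=
  ExteriorAlgebra.lift K ⟨aMap, aMap_sq_zero⟩

lemma Phi_ι (v : Fin n → K) : Phi K n (ExteriorAlgebra.ι K v) = aMap v := by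
  exact ExteriorAlgebra.lift_ι_apply (R := K) (M := Fin n → K)
    (A := Module.End K (Finset (Fin n) →₀ K)) aMap aMap_sq_zero v

lemma Phi_e (k : Fin n) : Phi K n (e K k) = aOp k := by
  rw [e, Phi_ι]
  have h0 : aMap (Pi.single k 1 : Fin n → K) = ∑ i, (Pi.single k 1 : Fin n → K) i • aOp i := rfl
  rw [h0, Finset.sum_eq_single k (fun b _ hb => by rw [Pi.single_eq_of_ne hb, zero_smul])
    (fun h => absurd (Finset.mem_univ k) h), Pi.single_eq_same, one_smul]

lemma Phi_P_single {l : List (Fin n)} (hl : l.Pairwise (· < ·)) :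
    ∀ T : Finset (Fin n), (∀ x ∈ l, ∀ t ∈ T, x < t) →
      Phi K n (P K l) (Finsupp.single T 1) = Finsupp.single (l.toFinset ∪ T) 1 := by
  induction l with
  | nil => intro T h; simp [P_nil]
  | cons a t ih =>
      intro T h
      obtain ⟨hat, hs⟩ := List.pairwise_cons.mp hl
      rw [P_cons, map_mul, Module.End.mul_apply,
        ih hs T (fun x hx t' ht' => h x (List.mem_cons_of_mem a hx) t' ht'),
        Phi_e, aOp_single]
      have ha : a ∉ t.toFinset ∪ T := by
        intro hmem
        rcases Finset.mem_union.mp hmem with hm | hm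
        · exact lt_irrefl a (hat a (List.mem_toFinset.mp hm))
        · exact lt_irrefl a (h a (List.mem_cons_self (a := a) (l := t)) a hm)
      rw [if_neg ha]
      have hsgn : sgn K a (t.toFinset ∪ T) = 1 := by
        rw [sgn]
        have : (t.toFinset ∪ T).filter (· < a) = ∅ := by
          rw [Finset.filter_eq_empty_iff]
          intro x hx
          rcases Finset.mem_union.mp hx with hm | hm
          · exact not_lt_of_gt (hat x (List.mem_toFinset.mp hm))
          · exact not_lt_of_gt (h a (List.mem_cons_self (a := a) (l := t)) x hm)
        rw [this]
        simp
      rw [hsgn, one_smul]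
      congr 1
      rw [List.toFinset_cons, Finset.insert_union]

lemma Phi_eMon (S : Finset (Fin n)) :
    Phi K n (eMon K S) (Finsupp.single ∅ 1) = Finsupp.single S 1 := by
  rw [eMon_def, Phi_P_single (Finset.sortedLT_sort S).pairwise ∅ (by simp)]
  rw [Finset.union_empty, Finset.sort_toFinset]

noncomputable def coeff (ν : Finset (Fin n)) :
    ExteriorAlgebra K (Fin n → K) →ₗ[K] K :=
  (Finsupp.lapply ν) ∘ₗ (LinearMap.applyₗ (Finsupp.single ∅ 1)) ∘ₗ (Phi K n).toLinearMap

lemma coeff_apply (ν : Finset (Fin n)) (x : ExteriorAlgebra K (Fin n → K)) :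
    coeff ν x = Phi K n x (Finsupp.single ∅ 1) ν := rfl

lemma coeff_eMon (ν S : Finset (Fin n)) :
    coeff (K := K) ν (eMon K S) = if S = ν then 1 else 0 := by
  rw [coeff_apply, Phi_eMon, Finsupp.single_apply]

noncomputable def SupT (K : Type) [Field K] {n : ℕ} (T : Finset (Fin n)) :
    Submodule K (Finset (Fin n) →₀ K) :=
  Finsupp.supported K K {S | T ⊆ S}

lemma aOp_supported {i : Fin n} {T : Finset (Fin n)} {x : Finset (Fin n) →₀ K}
    (hx : x ∈ SupT K T) : aOp i x ∈ SupT K T := by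
  rw [SupT, Finsupp.supported_eq_span_single] at hx
  induction hx using Submodule.span_induction with
  | mem v hv =>
      obtain ⟨S, hS, rfl⟩ := hv
      rw [aOp_single]
      split
      · exact Submodule.zero_mem _
      · refine Submodule.smul_mem _ _ ?_
        rw [SupT, Finsupp.mem_supported]
        intro U hU
        rw [Finset.mem_coe, Finsupp.mem_support_iff] at hU
        have : U = insert i S := by
          by_contra hne
          exact hU (Finsupp.single_eq_of_ne' (Ne.symm hne))
        subst this
        exact Set.mem_setOf.mpr ((Set.mem_setOf.mp hS).trans (Finset.subset_insert i S))
  | zero => rw [map_zero]; exact Submodule.zero_mem _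
  | add a b _ _ ha hb => rw [map_add]; exact Submodule.add_mem _ ha hb
  | smul c y _ hy => rw [map_smul]; exact Submodule.smul_mem _ c hy

lemma Phi_supported (w : ExteriorAlgebra K (Fin n → K)) :
    ∀ T : Finset (Fin n), ∀ x ∈ SupT K T, Phi K n w x ∈ SupT K T := by
  induction w using ExteriorAlgebra.induction with
  | algebraMap r =>
      intro T x hx
      rw [AlgHom.commutes]
      simpa [Module.algebraMap_end_apply] using Submodule.smul_mem _ r hx
  | ι v =>
      intro T x hx
      rw [Phi_ι]
      have h0 : aMap v = ∑ i, v i • aOp (K := K) i := rfl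
      rw [h0, LinearMap.sum_apply]
      refine Submodule.sum_mem _ fun i _ => ?_
      rw [LinearMap.smul_apply]
      exact Submodule.smul_mem _ _ (aOp_supported hx)
  | mul a b ha hb =>
      intro T x hx
      rw [map_mul, Module.End.mul_apply]
      exact ha T _ (hb T x hx)
  | add a b ha hb =>
      intro T x hx
      rw [map_add, LinearMap.add_apply]
      exact Submodule.add_mem _ (ha T x hx) (hb T x hx)

lemma coeff_zero_of_span {r : ℕ} {μs : Fin r → Finset (Fin n)} {p : Fin r → Prop}
    {ν : Finset (Fin n)} (hν : ∀ i, p i → ¬ μs i ⊆ ν)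
    {x : ExteriorAlgebra K (Fin n → K)}
    (hx : x ∈ Ideal.span {v | ∃ i, p i ∧ v = eMon K (μs i)}) :
    coeff (K := K) ν x = 0 := by
  have main : ∀ w, coeff (K := K) ν (w * x) = 0 := by
    induction hx using Submodule.span_induction with
    | mem v hv =>
        obtain ⟨i, hpi, rfl⟩ := hv
        intro w
        rw [coeff_apply, map_mul, Module.End.mul_apply, Phi_eMon]
        have h1 : Finsupp.single (μs i) (1:K) ∈ SupT K (μs i) := by
          rw [SupT, Finsupp.mem_supported]
          intro U hU
          rw [Finset.mem_coe, Finsupp.mem_support_iff] at hU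
          have : U = μs i := by
            by_contra hne
            exact hU (Finsupp.single_eq_of_ne' (Ne.symm hne))
          subst this
          exact Set.mem_setOf.mpr (le_refl _)
        have h2 := Phi_supported w (μs i) _ h1
        rw [SupT, Finsupp.mem_supported] at h2
        by_contra hne
        have hmem : ν ∈ (Phi K n w (Finsupp.single (μs i) 1)).support :=
          Finsupp.mem_support_iff.mpr hne
        exact hν i hpi (h2 hmem)
    | zero => intro w; rw [mul_zero, map_zero]
    | add a b _ _ ha hb => intro w; rw [mul_add, map_add, ha, hb, add_zero]
    | smul r y _ hy => intro w; rw [smul_eq_mul, ← mul_assoc]; exact hy _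
  simpa using main 1

lemma exists_divisor {r : ℕ} {μs : Fin r → Finset (Fin n)} {p : Fin r → Prop}
    {ν : Finset (Fin n)}
    (hx : eMon K ν ∈ Ideal.span {v | ∃ i, p i ∧ v = eMon K (μs i)}) :
    ∃ i, p i ∧ μs i ⊆ ν := by
  by_contra h
  push_neg at h
  have h0 := coeff_zero_of_span (fun i hi => h i hi) hx
  rw [coeff_eMon, if_pos rfl] at h0
  exact one_ne_zero h0

lemma eMon_mem_span {r : ℕ} {μs : Fin r → Finset (Fin n)} {p : Fin r → Prop}
    {ν : Finset (Fin n)} (i : Fin r) (hp : p i) (hsub : μs i ⊆ ν) :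
    eMon K ν ∈ Ideal.span {v | ∃ i, p i ∧ v = eMon K (μs i)} := by
  obtain ⟨w, hw⟩ := eMon_dvd (K := K) hsub
  rw [hw]
  exact Ideal.mul_mem_left _ _ (Ideal.subset_span ⟨i, hp, rfl⟩)

lemma sign_smul_mem {ε : K} (hε : IsSign ε) {I : Ideal (EA K n)} {x : EA K n}
    (h : ε • x ∈ I) : x ∈ I := by
  have hx : x = ε • (ε • x) := (hε.smul_cancel x).symm
  rw [hx, Algebra.smul_def]
  exact Ideal.mul_mem_left _ _ h

lemma mem_sign_smul {ε : K} (hε : IsSign ε) {I : Ideal (EA K n)} {x : EA K n}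
    (h : x ∈ I) : ε • x ∈ I := by
  rw [Algebra.smul_def]
  exact Ideal.mul_mem_left _ _ h

end Stable

namespace Stable
variable {K : Type} [Field K] {n : ℕ}

lemma eMon_mul_eMon_of_not_disjoint {S S' : Finset (Fin n)} (h : ¬ Disjoint S S') :
    eMon K S * eMon K S' = 0 := by
  obtain ⟨x, hxS, hxS'⟩ := Finset.not_disjoint_iff.mp h
  have hd : Disjoint (S.erase x) ({x} : Finset (Fin n)) := by
    simp [Finset.disjoint_singleton_right]
  obtain ⟨ε, hε, he⟩ := eMon_mul_disjoint (K := K) hd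
  have hu : S.erase x ∪ {x} = S := by
    rw [Finset.union_comm, ← Finset.insert_eq, Finset.insert_erase hxS]
  rw [hu, eMon_singleton] at he
  have hS : eMon K S = ε • (eMon K (S.erase x) * e K x) := by
    rw [he, hε.smul_cancel]
  rw [hS, smul_mul_assoc, mul_assoc, e_mul_eMon_mem hxS', mul_zero, smul_zero]

noncomputable def VMon (K : Type) [Field K] (n : ℕ) : Submodule K (EA K n) :=
  Submodule.span K {v | ∃ S : Finset (Fin n), v = eMon K S}

lemma eMon_mem_VMon (S : Finset (Fin n)) : eMon K S ∈ VMon K n :=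
  Submodule.subset_span ⟨S, rfl⟩

lemma eMon_mul_mem_VMon (S : Finset (Fin n)) {b : EA K n} (hb : b ∈ VMon K n) :
    eMon K S * b ∈ VMon K n := by
  induction hb using Submodule.span_induction with
  | mem v hv =>
      obtain ⟨S', rfl⟩ := hv
      by_cases hd : Disjoint S S'
      · obtain ⟨ε, hε, he⟩ := eMon_mul_disjoint (K := K) hd
        rw [he]
        exact Submodule.smul_mem _ _ (eMon_mem_VMon _)
      · rw [eMon_mul_eMon_of_not_disjoint hd]
        exact Submodule.zero_mem _
  | zero => rw [mul_zero]; exact Submodule.zero_mem _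
  | add a b _ _ ha hb => rw [mul_add]; exact Submodule.add_mem _ ha hb
  | smul c y _ hy => rw [mul_smul_comm]; exact Submodule.smul_mem _ c hy

lemma mul_mem_VMon {a b : EA K n} (ha : a ∈ VMon K n) (hb : b ∈ VMon K n) :
    a * b ∈ VMon K n := by
  induction ha using Submodule.span_induction with
  | mem v hv =>
      obtain ⟨S, rfl⟩ := hv
      exact eMon_mul_mem_VMon S hb
  | zero => rw [zero_mul]; exact Submodule.zero_mem _
  | add x y _ _ hx hy => rw [add_mul]; exact Submodule.add_mem _ hx hy
  | smul c y _ hy => rw [smul_mul_assoc]; exact Submodule.smul_mem _ c hy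

lemma mem_VMon (f : EA K n) : f ∈ VMon K n := by
  induction f using ExteriorAlgebra.induction with
  | algebraMap r =>
      rw [Algebra.algebraMap_eq_smul_one]
      have h1 : (1 : EA K n) ∈ VMon K n := by
        simpa using eMon_mem_VMon (K := K) (∅ : Finset (Fin n))
      exact Submodule.smul_mem _ r h1
  | ι v =>
      have hv : ExteriorAlgebra.ι K v = ∑ i, v i • e K i := by
        conv_lhs => rw [pi_eq_sum_univ v]
        rw [map_sum]
        refine Finset.sum_congr rfl fun i _ => ?_
        rw [map_smul, e]
        have h1 : (fun j => if i = j then (1:K) else 0) = Pi.single i 1 := by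
          funext j
          simp [Pi.single_apply, eq_comm]
        rw [h1]
      rw [hv]
      refine Submodule.sum_mem _ fun i _ => Submodule.smul_mem _ _ ?_
      simpa using eMon_mem_VMon (K := K) ({i} : Finset (Fin n))
  | mul a b ha hb => exact mul_mem_VMon ha hb
  | add a b ha hb => exact Submodule.add_mem _ ha hb

noncomputable def Jlow (K : Type) [Field K] {n : ℕ} (m : Fin n) : Ideal (EA K n) :=
  Ideal.span {v | ∃ k ∈ Finset.Iic m, v = e K k}

noncomputable def Whigh (K : Type) [Field K] {n : ℕ} (m : Fin n) : Submodule K (EA K n) :=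
  Submodule.span K {v | ∃ T : Finset (Fin n), (∀ t ∈ T, m < t) ∧ v = eMon K T}

lemma eMon_mem_Jlow {m : Fin n} {S : Finset (Fin n)} {k : Fin n} (hk : k ∈ S) (hkm : k ≤ m) :
    eMon K S ∈ Jlow K m := by
  have hd : Disjoint (S.erase k) ({k} : Finset (Fin n)) := by
    simp [Finset.disjoint_singleton_right]
  obtain ⟨ε, hε, he⟩ := eMon_mul_disjoint (K := K) hd
  have hu : S.erase k ∪ {k} = S := by
    rw [Finset.union_comm, ← Finset.insert_eq, Finset.insert_erase hk]
  rw [hu, eMon_singleton] at he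
  have hS : eMon K S = ε • (eMon K (S.erase k) * e K k) := by
    rw [he, hε.smul_cancel]
  rw [hS]
  refine mem_sign_smul hε (Ideal.mul_mem_left _ _ ?_)
  exact Ideal.subset_span ⟨k, Finset.mem_Iic.mpr hkm, rfl⟩

lemma total_decomp (m : Fin n) (f : EA K n) :
    ∃ g h, g ∈ Jlow K m ∧ h ∈ Whigh K m ∧ f = g + h := by
  have hf := mem_VMon (K := K) f
  induction hf using Submodule.span_induction with
  | mem v hv =>
      obtain ⟨S, rfl⟩ := hv
      by_cases hS : ∃ k ∈ S, k ≤ m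
      · obtain ⟨k, hk, hkm⟩ := hS
        exact ⟨eMon K S, 0, eMon_mem_Jlow hk hkm, Submodule.zero_mem _, by rw [add_zero]⟩
      · push_neg at hS
        exact ⟨0, eMon K S, Ideal.zero_mem _,
          Submodule.subset_span ⟨S, fun t ht => hS t ht, rfl⟩, by rw [zero_add]⟩
  | zero => exact ⟨0, 0, Ideal.zero_mem _, Submodule.zero_mem _, by rw [add_zero]⟩
  | add x y _ _ hx hy =>
      obtain ⟨g1, h1, hg1, hh1, rfl⟩ := hx
      obtain ⟨g2, h2, hg2, hh2, rfl⟩ := hy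
      exact ⟨g1 + g2, h1 + h2, Ideal.add_mem _ hg1 hg2, Submodule.add_mem _ hh1 hh2, by rw [add_add_add_comm]⟩
  | smul c y _ hy =>
      obtain ⟨g, h, hg, hh, rfl⟩ := hy
      refine ⟨c • g, c • h, ?_, Submodule.smul_mem _ c hh, by rw [smul_add]⟩
      rw [Algebra.smul_def]
      exact Ideal.mul_mem_left _ _ hg

end Stable

namespace Stable
variable {K : Type} [Field K] {n r : ℕ} {μs : Fin r → Finset (Fin n)}

lemma exists_divisor_full {ν : Finset (Fin n)}
    (hx : eMon K ν ∈ Ideal.span {v | ∃ i : Fin r, v = eMon K (μs i)}) :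
    ∃ i, μs i ⊆ ν := by
  have he : {v | ∃ i : Fin r, v = eMon K (μs i)}
      = {v | ∃ i : Fin r, True ∧ v = eMon K (μs i)} := by
    ext v; simp
  rw [he] at hx
  obtain ⟨i, _, h⟩ := exists_divisor hx
  exact ⟨i, h⟩

lemma card_le_of_lt
    (horder : ∀ i j : Fin r, i < j →
      (μs i).card < (μs j).card ∨
      ((μs i).card = (μs j).card ∧ μs i ≠ μs j ∧
        ∀ hd : (symmDiff (μs i) (μs j)).Nonempty,
          (symmDiff (μs i) (μs j)).max' hd ∈ μs j))
    {i j : Fin r} (hij : i < j) : (μs i).card ≤ (μs j).card := by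
  rcases horder i j hij with h | ⟨h, _, _⟩
  · exact le_of_lt h
  · exact le_of_eq h

lemma lt_of_card_lt
    (horder : ∀ i j : Fin r, i < j →
      (μs i).card < (μs j).card ∨
      ((μs i).card = (μs j).card ∧ μs i ≠ μs j ∧
        ∀ hd : (symmDiff (μs i) (μs j)).Nonempty,
          (symmDiff (μs i) (μs j)).max' hd ∈ μs j))
    {i j : Fin r} (h : (μs i).card < (μs j).card) : i < j := by
  rcases lt_trichotomy i j with h' | h' | h'
  · exact h'
  · subst h'; omega
  · have := card_le_of_lt horder h'; omega

lemma lt_of_maxsymm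
    (horder : ∀ i j : Fin r, i < j →
      (μs i).card < (μs j).card ∨
      ((μs i).card = (μs j).card ∧ μs i ≠ μs j ∧
        ∀ hd : (symmDiff (μs i) (μs j)).Nonempty,
          (symmDiff (μs i) (μs j)).max' hd ∈ μs j))
    {i j : Fin r} (hcard : (μs i).card = (μs j).card) (hne' : μs i ≠ μs j)
    (z : Fin n) (hz : z ∈ symmDiff (μs i) (μs j))
    (hzub : ∀ y ∈ symmDiff (μs i) (μs j), y ≤ z) (hzj : z ∈ μs j) : i < j := by
  rcases lt_trichotomy i j with h' | h' | h'
  · exact h'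
  · exact absurd (congrArg μs h') hne'
  · exfalso
    rcases horder j i h' with hc | ⟨_, _, hmax'⟩
    · omega
    · have hcomm : symmDiff (μs j) (μs i) = symmDiff (μs i) (μs j) := symmDiff_comm _ _
      have hd2 : (symmDiff (μs j) (μs i)).Nonempty := by rw [hcomm]; exact ⟨z, hz⟩
      have hwi := hmax' hd2
      have hwmem : (symmDiff (μs j) (μs i)).max' hd2 ∈ symmDiff (μs i) (μs j) := by
        rw [← hcomm]; exact Finset.max'_mem _ _
      have hwj : (symmDiff (μs j) (μs i)).max' hd2 ∉ μs j := by
        rcases Finset.mem_symmDiff.mp hwmem with ⟨_, h2⟩ | ⟨_, h2⟩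
        · exact h2
        · exact absurd hwi h2
      have hzw : z ≤ (symmDiff (μs j) (μs i)).max' hd2 := by
        refine Finset.le_max' _ z ?_
        rw [hcomm]; exact hz
      have hwz : (symmDiff (μs j) (μs i)).max' hd2 ≤ z := hzub _ hwmem
      have : (symmDiff (μs j) (μs i)).max' hd2 = z := le_antisymm hwz hzw
      rw [this] at hwj
      exact hwj hzj

lemma stab_step
    (hstable : ∀ ν : Finset (Fin n), ∀ hν : ν.Nonempty,
      eMon K ν ∈ Ideal.span {v | ∃ i : Fin r, v = eMon K (μs i)} →
      ∀ k : Fin n, k < ν.max' hν →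
        e K k * eMon K (ν.erase (ν.max' hν))
          ∈ Ideal.span {v | ∃ i : Fin r, v = eMon K (μs i)})
    {σ : Finset (Fin n)} (hσ : σ.Nonempty)
    (hmem : eMon K σ ∈ Ideal.span {v | ∃ i : Fin r, v = eMon K (μs i)})
    {t : Fin n} (ht : t < σ.max' hσ) (htn : t ∉ σ.erase (σ.max' hσ)) :
    eMon K (insert t (σ.erase (σ.max' hσ)))
      ∈ Ideal.span {v | ∃ i : Fin r, v = eMon K (μs i)} := by
  have h := hstable σ hσ hmem t ht
  obtain ⟨ε, hε, he⟩ := e_mul_eMon_not_mem (K := K) htn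
  rw [he] at h
  exact sign_smul_mem hε h

lemma no_small_divisor (hmin : ∀ i j, i ≠ j → ¬ μs i ⊆ μs j) (j : Fin r)
    {σ : Finset (Fin n)} (hsubj : σ ⊆ μs j) (hcard : σ.card < (μs j).card)
    (hmem : eMon K σ ∈ Ideal.span {v | ∃ i : Fin r, v = eMon K (μs i)}) : False := by
  obtain ⟨i, hisub⟩ := exists_divisor_full hmem
  have h1 : (μs i).card ≤ σ.card := Finset.card_le_card hisub
  have hij : i ≠ j := by
    intro he
    subst he
    omega
  exact hmin i j hij (hisub.trans hsubj)

end Stable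

namespace Stable
variable {K : Type} [Field K] {n r : ℕ} {μs : Fin r → Finset (Fin n)}

lemma strip (hne : ∀ j, (μs j).Nonempty) (hmin : ∀ i j, i ≠ j → ¬ μs i ⊆ μs j)
    (hstable : ∀ ν : Finset (Fin n), ∀ hν : ν.Nonempty,
      eMon K ν ∈ Ideal.span {v | ∃ i : Fin r, v = eMon K (μs i)} →
      ∀ k : Fin n, k < ν.max' hν →
        e K k * eMon K (ν.erase (ν.max' hν))
          ∈ Ideal.span {v | ∃ i : Fin r, v = eMon K (μs i)})
    (j : Fin r) (T : Finset (Fin n))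
    (hT : ∀ t ∈ T, (μs j).max' (hne j) < t) :
    ∀ d (σ : Finset (Fin n)), (σ \ μs j).card ≤ d → σ.Nonempty →
      σ.card < (μs j).card → σ ⊆ μs j ∪ T →
      eMon K σ ∈ Ideal.span {v | ∃ i : Fin r, v = eMon K (μs i)} → False := by
  intro d
  induction d with
  | zero =>
      intro σ hd hσ hcard hsub hmem
      have hsubj : σ ⊆ μs j := by
        intro x hx
        by_contra hxn
        have h1 : x ∈ σ \ μs j := Finset.mem_sdiff.mpr ⟨hx, hxn⟩
        have := Finset.card_pos.mpr ⟨x, h1⟩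
        omega
      exact no_small_divisor hmin j hsubj hcard hmem
  | succ d ih =>
      intro σ hd hσ hcard hsub hmem
      by_cases hsubj : σ ⊆ μs j
      · exact no_small_divisor hmin j hsubj hcard hmem
      · obtain ⟨x, hxσ, hxj⟩ := Finset.not_subset.mp hsubj
        have hxT : x ∈ T := (Finset.mem_union.mp (hsub hxσ)).resolve_left hxj
        have hmx : (μs j).max' (hne j) < x := hT x hxT
        set k := σ.max' hσ with hk
        have hxk : x ≤ k := Finset.le_max' _ x hxσ
        have hkσ : k ∈ σ := Finset.max'_mem _ _
        have hkm : (μs j).max' (hne j) < k := lt_of_lt_of_le hmx hxk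
        have hkj : k ∉ μs j := fun h =>
          absurd (Finset.le_max' _ k h) (not_le.mpr hkm)
        have hne2 : (μs j \ σ).Nonempty := by
          rw [Finset.sdiff_nonempty]
          intro h
          exact absurd (Finset.card_le_card h) (not_le.mpr hcard)
        obtain ⟨t, ht2⟩ := hne2
        obtain ⟨htj, htσ⟩ := Finset.mem_sdiff.mp ht2
        have htm : t ≤ (μs j).max' (hne j) := Finset.le_max' _ t htj
        have htk : t < k := lt_of_le_of_lt htm hkm
        have htn : t ∉ σ.erase k := fun h => htσ (Finset.mem_of_mem_erase h)
        have hstep := stab_step hstable hσ hmem htk htn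
        have hkdiff : k ∈ σ \ μs j := Finset.mem_sdiff.mpr ⟨hkσ, hkj⟩
        have hcount : σ.card ≥ 1 := Finset.card_pos.mpr hσ
        have hcins : (insert t (σ.erase k)).card = σ.card := by
          rw [Finset.card_insert_of_notMem htn, Finset.card_erase_of_mem hkσ]
          omega
        apply ih (insert t (σ.erase k)) ?_ (Finset.insert_nonempty _ _) (by omega) ?_ hstep
        · have hsub2 : (insert t (σ.erase k)) \ μs j ⊆ (σ \ μs j).erase k := by
            intro y hy
            obtain ⟨hy1, hy2⟩ := Finset.mem_sdiff.mp hy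
            rcases Finset.mem_insert.mp hy1 with rfl | hy3
            · exact absurd htj hy2
            · exact Finset.mem_erase.mpr ⟨(Finset.mem_erase.mp hy3).1,
                Finset.mem_sdiff.mpr ⟨Finset.mem_of_mem_erase hy3, hy2⟩⟩
          have h5 := Finset.card_le_card hsub2
          rw [Finset.card_erase_of_mem hkdiff] at h5
          have h6 : (σ \ μs j).card ≥ 1 := Finset.card_pos.mpr ⟨k, hkdiff⟩
          omega
        · intro y hy
          rcases Finset.mem_insert.mp hy with rfl | hy2
          · exact Finset.mem_union_left _ htj
          · exact hsub (Finset.mem_of_mem_erase hy2)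

lemma key2 (hne : ∀ j, (μs j).Nonempty) (hmin : ∀ i j, i ≠ j → ¬ μs i ⊆ μs j)
    (horder : ∀ i j : Fin r, i < j →
      (μs i).card < (μs j).card ∨
      ((μs i).card = (μs j).card ∧ μs i ≠ μs j ∧
        ∀ hd : (symmDiff (μs i) (μs j)).Nonempty,
          (symmDiff (μs i) (μs j)).max' hd ∈ μs j))
    (hstable : ∀ ν : Finset (Fin n), ∀ hν : ν.Nonempty,
      eMon K ν ∈ Ideal.span {v | ∃ i : Fin r, v = eMon K (μs i)} →
      ∀ k : Fin n, k < ν.max' hν →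
        e K k * eMon K (ν.erase (ν.max' hν))
          ∈ Ideal.span {v | ∃ i : Fin r, v = eMon K (μs i)})
    (j : Fin r) (T : Finset (Fin n))
    (hT : ∀ t ∈ T, (μs j).max' (hne j) < t) {i : Fin r} (hij : i < j)
    (hsub : μs i ⊆ μs j ∪ T) : False := by
  by_cases hsj : μs i ⊆ μs j
  · exact hmin i j (ne_of_lt hij) hsj
  rcases horder i j hij with hc | ⟨hc, hne', hmax⟩
  · exact strip hne hmin hstable j T hT (μs i \ μs j).card (μs i) le_rfl (hne i) hc hsub
      (Ideal.subset_span ⟨i, rfl⟩)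
  · obtain ⟨x, hxi, hxj⟩ := Finset.not_subset.mp hsj
    have hxT : x ∈ T := (Finset.mem_union.mp (hsub hxi)).resolve_left hxj
    have hx : x ∈ symmDiff (μs i) (μs j) := Finset.mem_symmDiff.mpr (Or.inl ⟨hxi, hxj⟩)
    have hd : (symmDiff (μs i) (μs j)).Nonempty := ⟨x, hx⟩
    have h1 := hmax hd
    have h2 : (symmDiff (μs i) (μs j)).max' hd ≤ (μs j).max' (hne j) :=
      Finset.le_max' _ _ h1
    have h3 : x ≤ (symmDiff (μs i) (μs j)).max' hd := Finset.le_max' _ x hx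
    exact absurd ((hT x hxT).trans_le (h3.trans h2)) (lt_irrefl _)

lemma key1 (hne : ∀ j, (μs j).Nonempty)
    (horder : ∀ i j : Fin r, i < j →
      (μs i).card < (μs j).card ∨
      ((μs i).card = (μs j).card ∧ μs i ≠ μs j ∧
        ∀ hd : (symmDiff (μs i) (μs j)).Nonempty,
          (symmDiff (μs i) (μs j)).max' hd ∈ μs j))
    (hstable : ∀ ν : Finset (Fin n), ∀ hν : ν.Nonempty,
      eMon K ν ∈ Ideal.span {v | ∃ i : Fin r, v = eMon K (μs i)} →
      ∀ k : Fin n, k < ν.max' hν →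
        e K k * eMon K (ν.erase (ν.max' hν))
          ∈ Ideal.span {v | ∃ i : Fin r, v = eMon K (μs i)})
    (j : Fin r) {k : Fin n}
    (hk : k < (μs j).max' (hne j)) (hkj : k ∉ μs j) :
    ∃ i, i < j ∧ μs i ⊆ insert k (μs j) := by
  set m := (μs j).max' (hne j) with hm
  have hmj : m ∈ μs j := Finset.max'_mem _ _
  have hkτ : k ∉ (μs j).erase m := fun h => hkj (Finset.mem_of_mem_erase h)
  have hstep := stab_step (μs := μs) hstable (hne j) (Ideal.subset_span ⟨j, rfl⟩) hk hkτ
  set τ := insert k ((μs j).erase m) with hτ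
  obtain ⟨i, hisub⟩ := exists_divisor_full hstep
  have hmτ : m ∉ τ := by
    rw [hτ, Finset.mem_insert]
    rintro (h | h)
    · exact absurd h.symm (ne_of_lt hk)
    · exact Finset.notMem_erase m _ h
  have hcτ : τ.card = (μs j).card := by
    rw [hτ, Finset.card_insert_of_notMem hkτ, Finset.card_erase_of_mem hmj]
    have := Finset.card_pos.mpr ⟨m, hmj⟩
    omega
  have hτsub : τ ⊆ insert k (μs j) := by
    intro y hy
    rcases Finset.mem_insert.mp hy with rfl | hy2
    · exact Finset.mem_insert_self _ _
    · exact Finset.mem_insert_of_mem (Finset.mem_of_mem_erase hy2)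
  refine ⟨i, ?_, hisub.trans hτsub⟩
  rcases lt_or_eq_of_le (Finset.card_le_card hisub) with hlt | heq
  · exact lt_of_card_lt horder (by omega)
  · have hiτ : μs i = τ := Finset.eq_of_subset_of_card_le hisub (le_of_eq heq.symm)
    have hsd : symmDiff (μs i) (μs j) = {k, m} := by
      rw [hiτ]
      ext x
      rw [Finset.mem_symmDiff]
      constructor
      · rintro (⟨hx1, hx2⟩ | ⟨hx1, hx2⟩)
        · rcases Finset.mem_insert.mp hx1 with rfl | hx3
          · exact Finset.mem_insert_self _ _
          · exact absurd (Finset.mem_of_mem_erase hx3) hx2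
        · have hxm : x = m := by
            by_contra hxm
            exact hx2 (Finset.mem_insert_of_mem (Finset.mem_erase.mpr ⟨hxm, hx1⟩))
          rw [hxm]
          exact Finset.mem_insert_of_mem (Finset.mem_singleton_self m)
      · intro hx
        rcases Finset.mem_insert.mp hx with rfl | hx2
        · exact Or.inl ⟨Finset.mem_insert_self _ _, hkj⟩
        · rw [Finset.mem_singleton.mp hx2]
          exact Or.inr ⟨hmj, hmτ⟩
    have hne' : μs i ≠ μs j := by
      rw [hiτ]
      intro h
      rw [h] at hmτ
      exact hmτ hmj
    refine lt_of_maxsymm horder (by omega) hne' m ?_ ?_ hmj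
    · rw [hsd]
      exact Finset.mem_insert_of_mem (Finset.mem_singleton_self m)
    · intro y hy
      rw [hsd] at hy
      rcases Finset.mem_insert.mp hy with rfl | hy2
      · exact le_of_lt hk
      · rw [Finset.mem_singleton.mp hy2]

end Stable

noncomputable def Ibelow' (K : Type) [Field K] {n r : ℕ}
    (μs : Fin r → Finset (Fin n)) (j : Fin r) :
    Ideal (ExteriorAlgebra K (Fin n → K)) :=
  Ideal.span {v | ∃ i, i < j ∧ v = eMon K (μs i)}

namespace Stable
variable {K : Type} [Field K] {n r : ℕ} {μs : Fin r → Finset (Fin n)}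

lemma IsSign.ne_zero {ε : K} (h : IsSign ε) : ε ≠ 0 := by
  rcases h with h | h
  · rw [h]; exact one_ne_zero
  · rw [h]; exact neg_ne_zero.mpr one_ne_zero

lemma setIdx_eq' (hne : ∀ j, (μs j).Nonempty) (hmin : ∀ i j, i ≠ j → ¬ μs i ⊆ μs j)
    (horder : ∀ i j : Fin r, i < j →
      (μs i).card < (μs j).card ∨
      ((μs i).card = (μs j).card ∧ μs i ≠ μs j ∧
        ∀ hd : (symmDiff (μs i) (μs j)).Nonempty,
          (symmDiff (μs i) (μs j)).max' hd ∈ μs j))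
    (hstable : ∀ ν : Finset (Fin n), ∀ hν : ν.Nonempty,
      eMon K ν ∈ Ideal.span {v | ∃ i : Fin r, v = eMon K (μs i)} →
      ∀ k : Fin n, k < ν.max' hν →
        e K k * eMon K (ν.erase (ν.max' hν))
          ∈ Ideal.span {v | ∃ i : Fin r, v = eMon K (μs i)})
    (j : Fin r) (k : Fin n) :
    e K k * eMon K (μs j) ∈ Ibelow' K μs j ↔ k ≤ (μs j).max' (hne j) := by
  constructor
  · intro hk
    by_contra hkm
    push_neg at hkm
    have hkj : k ∉ μs j := fun h => absurd (Finset.le_max' _ k h) (not_le.mpr hkm)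
    obtain ⟨ε, hε, he⟩ := e_mul_eMon_not_mem (K := K) hkj
    rw [he] at hk
    have h2 : eMon K (insert k (μs j)) ∈ Ibelow' K μs j := sign_smul_mem hε hk
    rw [Ibelow'] at h2
    obtain ⟨i, hij, hisub⟩ := exists_divisor h2
    have hsub2 : μs i ⊆ μs j ∪ {k} := by
      refine hisub.trans ?_
      intro y hy
      rcases Finset.mem_insert.mp hy with rfl | hy2
      · exact Finset.mem_union_right _ (Finset.mem_singleton_self _)
      · exact Finset.mem_union_left _ hy2
    exact key2 hne hmin horder hstable j {k}
      (fun t htm => by rw [Finset.mem_singleton.mp htm]; exact hkm) hij hsub2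
  · intro hk
    by_cases hkj : k ∈ μs j
    · rw [e_mul_eMon_mem hkj]
      exact Ideal.zero_mem _
    · have hklt : k < (μs j).max' (hne j) :=
        lt_of_le_of_ne hk (fun h => hkj (h ▸ Finset.max'_mem _ _))
      obtain ⟨i, hij, hisub⟩ := key1 hne horder hstable j hklt hkj
      have hmem : eMon K (insert k (μs j)) ∈ Ibelow' K μs j := by
        rw [Ibelow']
        exact eMon_mem_span i hij hisub
      obtain ⟨ε, hε, he⟩ := e_mul_eMon_not_mem (K := K) hkj
      rw [he]
      exact mem_sign_smul hε hmem

lemma high_kill (hne : ∀ j, (μs j).Nonempty) (hmin : ∀ i j, i ≠ j → ¬ μs i ⊆ μs j)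
    (horder : ∀ i j : Fin r, i < j →
      (μs i).card < (μs j).card ∨
      ((μs i).card = (μs j).card ∧ μs i ≠ μs j ∧
        ∀ hd : (symmDiff (μs i) (μs j)).Nonempty,
          (symmDiff (μs i) (μs j)).max' hd ∈ μs j))
    (hstable : ∀ ν : Finset (Fin n), ∀ hν : ν.Nonempty,
      eMon K ν ∈ Ideal.span {v | ∃ i : Fin r, v = eMon K (μs i)} →
      ∀ k : Fin n, k < ν.max' hν →
        e K k * eMon K (ν.erase (ν.max' hν))
          ∈ Ideal.span {v | ∃ i : Fin r, v = eMon K (μs i)})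
    (j : Fin r) {h : EA K n}
    (hh : h ∈ Whigh K ((μs j).max' (hne j)))
    (hhu : h * eMon K (μs j) ∈ Ibelow' K μs j) : h = 0 := by
  have hdisj : ∀ T' : Finset (Fin n), (∀ t ∈ T', (μs j).max' (hne j) < t) →
      Disjoint T' (μs j) := by
    intro T' hT'
    rw [Finset.disjoint_left]
    intro a ha haj
    exact absurd (Finset.le_max' _ a haj) (not_le.mpr (hT' a ha))
  obtain ⟨c, hsupp, hsum⟩ := Submodule.mem_span_set.mp hh
  have hzero : ∀ v ∈ c.support, c v = 0 := by
    intro v hv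
    obtain ⟨T, hT, hveq⟩ := hsupp hv
    subst hveq
    have hν : ∀ i, i < j → ¬ μs i ⊆ T ∪ μs j := by
      intro i hij hcon
      exact key2 hne hmin horder hstable j T hT hij (by rwa [Finset.union_comm])
    have h0 : coeff (K := K) (T ∪ μs j) (h * eMon K (μs j)) = 0 := by
      rw [Ibelow'] at hhu
      exact coeff_zero_of_span hν hhu
    rw [← hsum, Finsupp.sum, Finset.sum_mul, map_sum] at h0
    obtain ⟨εv, hεv, hev⟩ := eMon_mul_disjoint (K := K) (hdisj T hT)
    have hmain : (∑ w ∈ c.support,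
        coeff (K := K) (T ∪ μs j) ((c w • w) * eMon K (μs j))) = c (eMon K T) * εv := by
      rw [Finset.sum_eq_single (eMon K T)]
      · rw [smul_mul_assoc, map_smul, hev, map_smul, coeff_eMon, if_pos rfl,
          smul_eq_mul, smul_eq_mul, mul_one]
      · intro w hw hwne
        obtain ⟨T', hT', hweq⟩ := hsupp hw
        subst hweq
        obtain ⟨ε', hε', he'⟩ := eMon_mul_disjoint (K := K) (hdisj T' hT')
        have hTT : T' ∪ μs j ≠ T ∪ μs j := by
          intro hun
          apply hwne
          have h1 : T' = T := by
            have h2 := congrArg (fun s => s \ μs j) hun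
            simpa [Finset.union_sdiff_cancel_right (hdisj T' hT'),
              Finset.union_sdiff_cancel_right (hdisj T hT)] using h2
          rw [h1]
        rw [smul_mul_assoc, map_smul, he', map_smul, coeff_eMon, if_neg hTT,
          smul_eq_mul, smul_eq_mul, mul_zero, mul_zero]
      · intro hvn
        exact absurd hv hvn
    rw [hmain] at h0
    rcases mul_eq_zero.mp h0 with h1 | h1
    · exact h1
    · exact absurd h1 hεv.ne_zero
  have hempty : c.support = ∅ :=
    Finset.eq_empty_of_forall_notMem (fun v hv => (Finsupp.mem_support_iff.mp hv) (hzero v hv))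
  rw [← hsum, Finsupp.sum, hempty, Finset.sum_empty]

lemma colon_eq (hne : ∀ j, (μs j).Nonempty) (hmin : ∀ i j, i ≠ j → ¬ μs i ⊆ μs j)
    (horder : ∀ i j : Fin r, i < j →
      (μs i).card < (μs j).card ∨
      ((μs i).card = (μs j).card ∧ μs i ≠ μs j ∧
        ∀ hd : (symmDiff (μs i) (μs j)).Nonempty,
          (symmDiff (μs i) (μs j)).max' hd ∈ μs j))
    (hstable : ∀ ν : Finset (Fin n), ∀ hν : ν.Nonempty,
      eMon K ν ∈ Ideal.span {v | ∃ i : Fin r, v = eMon K (μs i)} →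
      ∀ k : Fin n, k < ν.max' hν →
        e K k * eMon K (ν.erase (ν.max' hν))
          ∈ Ideal.span {v | ∃ i : Fin r, v = eMon K (μs i)})
    (j : Fin r) :
    {f : ExteriorAlgebra K (Fin n → K) | f * eMon K (μs j) ∈ Ibelow' K μs j}
      = (Ideal.span {v | ∃ k ∈ Finset.Iic ((μs j).max' (hne j)), v = e K k} :
          Set (ExteriorAlgebra K (Fin n → K))) := by
  have hJeq : Jlow K ((μs j).max' (hne j))
      = Ideal.span {v | ∃ k ∈ Finset.Iic ((μs j).max' (hne j)), v = e K k} := rfl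
  have hJ : ∀ g ∈ Jlow K ((μs j).max' (hne j)), g * eMon K (μs j) ∈ Ibelow' K μs j := by
    intro g hg
    induction hg using Submodule.span_induction with
    | mem v hv =>
        obtain ⟨k, hk, rfl⟩ := hv
        exact (setIdx_eq' hne hmin horder hstable j k).mpr (Finset.mem_Iic.mp hk)
    | zero => rw [zero_mul]; exact Ideal.zero_mem _
    | add a b _ _ ha hb => rw [add_mul]; exact Ideal.add_mem _ ha hb
    | smul cc y _ hy => rw [smul_eq_mul, mul_assoc]; exact Ideal.mul_mem_left _ _ hy
  ext f
  simp only [Set.mem_setOf_eq, SetLike.mem_coe]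
  constructor
  · intro hf
    obtain ⟨g, h, hg, hh, rfl⟩ := total_decomp ((μs j).max' (hne j)) f
    have hgu := hJ g hg
    have hhu : h * eMon K (μs j) ∈ Ibelow' K μs j := by
      have hd := Ideal.sub_mem _ hf hgu
      rw [add_mul, add_sub_cancel_left] at hd
      exact hd
    have hzero : h = 0 := high_kill hne hmin horder hstable j hh hhu
    rw [hzero, add_zero]
    rw [← hJeq]
    exact hg
  · intro hf
    apply hJ
    rw [hJeq]
    exact hf

end Stable


/-- Let `I` be a stable monomial ideal of `E = K⟨e_1,…,e_n⟩` with minimal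
monomial generators `u_1, …, u_r` (no generator divides another) listed in the
reverse degree lexicographic order. Then `I` has linear quotients with respect
to this order and, for every generator `u_j`, `set(u_j) = {1, …, m(u_j)}` where
`m(u) = max supp(u)`. -/
theorem stmt10 {K : Type} [Field K] {n r : ℕ} (μs : Fin r → Finset (Fin n))
    (hne : ∀ j, (μs j).Nonempty)
    (hmin : ∀ i j, i ≠ j → ¬ μs i ⊆ μs j)
    -- the generators are listed in reverse degree lexicographic order
    (horder : ∀ i j : Fin r, i < j →
      (μs i).card < (μs j).card ∨
      ((μs i).card = (μs j).card ∧ μs i ≠ μs j ∧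
        ∀ hd : (symmDiff (μs i) (μs j)).Nonempty,
          (symmDiff (μs i) (μs j)).max' hd ∈ μs j))
    -- `I = (u_1, …, u_r)` is stable
    (hstable : ∀ ν : Finset (Fin n), ∀ hν : ν.Nonempty,
      eMon K ν ∈ Ideal.span {v | ∃ i : Fin r, v = eMon K (μs i)} →
      ∀ k : Fin n, k < ν.max' hν →
        e K k * eMon K (ν.erase (ν.max' hν))
          ∈ Ideal.span {v | ∃ i : Fin r, v = eMon K (μs i)}) :
    LinearQuotients K μs ∧
    ∀ j : Fin r, setIdx K μs j = {k : Fin n | k ≤ (μs j).max' (hne j)} := by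
  constructor
  · intro j
    exact ⟨Finset.Iic ((μs j).max' (hne j)),
      Stable.colon_eq hne hmin horder hstable j⟩
  · intro j
    ext k
    simp only [setIdx, Set.mem_setOf_eq]
    exact Stable.setIdx_eq' hne hmin horder hstable j k
end

section
/- Let I be a monomial ideal of the exterior algebra E with linear quotients relative to u_1,...,u_r, let g : M(I) → G(I) be the decomposition function (g(u) = u_j where j is minimal with u ∈ (u_1,...,u_j)). Then for every monomial u ∈ M(I), u factors as u = g(u)·c(u) for some monomial c(u), and set(g(u)) ∩ supp(c(u)) = ∅. -/
open ExteriorAlgebra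

section Aux

variable {K : Type} [Field K] {n : ℕ}

lemma e_anticomm (i j : Fin n) : e K i * e K j = - (e K j * e K i) :=
  eq_neg_of_add_eq_zero_left (ι_add_mul_swap _ _)

/-- Products of the `e_k` over permuted lists agree up to a unit scalar. -/
lemma prod_perm {l l' : List (Fin n)} (h : l.Perm l') :
    ∃ c : Kˣ, (l.map (e K)).prod = (c : K) • (l'.map (e K)).prod := by
  induction h with
  | nil => exact ⟨1, by simp⟩
  | cons x _ ih =>
      obtain ⟨c, hc⟩ := ih
      exact ⟨c, by simp [hc, mul_smul_comm]⟩
  | swap x y l =>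
      refine ⟨-1, ?_⟩
      simp only [List.map_cons, List.prod_cons, ← mul_assoc, e_anticomm y x]
      simp
  | trans _ _ ih1 ih2 =>
      obtain ⟨c, hc⟩ := ih1
      obtain ⟨d, hd⟩ := ih2
      exact ⟨c * d, by rw [hc, hd, smul_smul]; norm_cast⟩

lemma sort_perm_sdiff_append {μ ν : Finset (Fin n)} (h : μ ⊆ ν) :
    (ν.sort (· ≤ ·)).Perm ((ν \ μ).sort (· ≤ ·) ++ μ.sort (· ≤ ·)) := by
  rw [← Multiset.coe_eq_coe, ← Multiset.coe_add]
  rw [Finset.sort_eq, Finset.sort_eq, Finset.sort_eq, Finset.sdiff_val,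
    tsub_add_cancel_of_le (Finset.val_le_iff.2 h)]

/-- Divisibility: if `μ ⊆ ν` then `e_ν` is a (left) multiple of `e_μ`. -/
lemma eMon_mem_span_of_subset {μ ν : Finset (Fin n)} (h : μ ⊆ ν) :
    eMon K ν ∈ Ideal.span {eMon K μ} := by
  obtain ⟨c, hc⟩ := prod_perm (K := K) (sort_perm_sdiff_append h)
  simp only [eMon]
  rw [hc, List.map_append, List.prod_append, Algebra.smul_def, ← mul_assoc]
  exact Ideal.mul_mem_left _ _ (Ideal.subset_span rfl)

/-- Monomials of the exterior algebra are nonzero. -/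
lemma eMon_ne_zero (ν : Finset (Fin n)) : eMon K ν ≠ 0 := by
  set l := ν.sort (· ≤ ·) with hl
  set s : Fin l.length → Fin n := l.get with hs
  have hsinj : Function.Injective s := (List.nodup_iff_injective_get).1 (ν.sort_nodup _)
  set F : (Fin n → K) [⋀^Fin l.length]→ₗ[K] K :=
    Matrix.detRowAlternating.compLinearMap (LinearMap.funLeft K K s) with hF
  set f : ∀ i, (Fin n → K) [⋀^Fin i]→ₗ[K] K :=
    fun i => if h : i = l.length then h ▸ F else 0 with hf
  set v : Fin l.length → (Fin n → K) := fun a => Pi.single (s a) 1 with hv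
  have h1 : eMon K ν = ιMulti K l.length v := by
    rw [ιMulti_apply, eMon, ← hl]
    congr 1
    show List.map (e K) l = List.ofFn (e K ∘ l.get)
    rw [← List.map_ofFn, List.ofFn_get]
  have h2 : liftAlternating f (ιMulti K l.length v) = F v := by
    rw [liftAlternating_apply_ιMulti, hf]
    simp
  have h3 : F v = 1 := by
    rw [hF]
    have : (fun a => LinearMap.funLeft K K s (v a))
        = (1 : Matrix (Fin l.length) (Fin l.length) K) := by
      funext a b
      simp only [LinearMap.funLeft_apply, hv, Matrix.one_apply, Pi.single_apply]
      by_cases hab : a = b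
      · simp [hab]
      · rw [if_neg (fun hcon => hab (hsinj hcon).symm), if_neg hab]
    simp only [AlternatingMap.compLinearMap_apply]
    rw [this]
    exact Matrix.det_one
  intro hz
  have := h1 ▸ hz
  rw [this, map_zero] at h2
  rw [h3] at h2
  exact one_ne_zero h2.symm

/-- Projection onto coordinates in `τ`. -/
noncomputable def projτ (K : Type) [Field K] {n : ℕ} (τ : Finset (Fin n)) :
    (Fin n → K) →ₗ[K] (Fin n → K) where
  toFun x := fun j => if j ∈ τ then x j else 0
  map_add' x y := by funext j; by_cases h : j ∈ τ <;> simp [h]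
  map_smul' c x := by funext j; by_cases h : j ∈ τ <;> simp [h]

/-- The algebra endomorphism killing `e_k` for `k ∉ τ`. -/
noncomputable def phiτ (K : Type) [Field K] {n : ℕ} (τ : Finset (Fin n)) :
    ExteriorAlgebra K (Fin n → K) →ₐ[K] ExteriorAlgebra K (Fin n → K) :=
  lift K ⟨(ι K).comp (projτ K τ), fun _ => ι_sq_zero _⟩

lemma phiτ_e (τ : Finset (Fin n)) (k : Fin n) :
    phiτ K τ (e K k) = if k ∈ τ then e K k else 0 := by
  rw [phiτ, e, lift_ι_apply, LinearMap.comp_apply]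
  have : projτ K τ (Pi.single k 1) = if k ∈ τ then Pi.single k 1 else 0 := by
    funext j
    by_cases hk : k ∈ τ
    · simp only [if_pos hk, projτ, LinearMap.coe_mk, AddHom.coe_mk]
      by_cases hj : j ∈ τ
      · simp [hj]
      · rw [if_neg hj, Pi.single_apply, if_neg]
        intro hjk; exact hj (hjk ▸ hk)
    · simp only [if_neg hk, projτ, LinearMap.coe_mk, AddHom.coe_mk]
      by_cases hj : j ∈ τ
      · rw [if_pos hj, Pi.single_apply, if_neg, Pi.zero_apply]
        intro hjk; exact hk (hjk ▸ hj)
      · simp [hj]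
  rw [this]
  by_cases hk : k ∈ τ <;> simp [hk, e]

/-- A monomial lies in a monomial (left) ideal only if one of the generating
monomials divides it. -/
lemma exists_subset_of_mem_span {τ : Finset (Fin n)} {σ : Type*} (f : σ → Finset (Fin n))
    (p : σ → Prop)
    (h : eMon K τ ∈ Ideal.span {v | ∃ i, p i ∧ v = eMon K (f i)}) :
    ∃ i, p i ∧ f i ⊆ τ := by
  by_contra hc
  push_neg at hc
  have hkill : ∀ x ∈ Ideal.span {v | ∃ i, p i ∧ v = eMon K (f i)}, phiτ K τ x = 0 := by
    intro x hx
    rw [Ideal.span] at hx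
    induction hx using Submodule.span_induction with
    | mem v hv =>
      obtain ⟨i, hpi, rfl⟩ := hv
      obtain ⟨k, hkf, hkτ⟩ := Finset.not_subset.1 (hc i hpi)
      rw [eMon, map_list_prod]
      refine List.prod_eq_zero ?_
      rw [List.map_map]
      refine List.mem_map.2 ⟨k, ?_, ?_⟩
      · exact (Finset.mem_sort _).2 hkf
      · simp [Function.comp, phiτ_e, hkτ]
    | zero => exact map_zero _
    | add x y _ _ hx hy => rw [map_add, hx, hy, add_zero]
    | smul a x _ hx => rw [smul_eq_mul, map_mul, hx, mul_zero]
  have hfix : phiτ K τ (eMon K τ) = eMon K τ := by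
    rw [eMon, map_list_prod, List.map_map]
    congr 1
    refine List.map_congr_left ?_
    intro k hk
    simp [Function.comp, phiτ_e, (Finset.mem_sort _).1 hk]
  exact eMon_ne_zero τ ((hfix.symm.trans (hkill _ h)))

end Aux

/-- Let `I` have linear quotients with respect to `u_1, …, u_r` and let
`g : M(I) → G(I)` be the decomposition function (`g(u) = u_j` for the least `j`
with `u ∈ (u_1,…,u_j)`). Then every monomial `u = e_ν ∈ M(I)` factors as
`u = g(u)·c(u)` (i.e. the support of `g(u)` is contained in `ν`, with
complementary factor `c(u) = e_{ν \ supp(g(u))}`), and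
`set(g(u)) ∩ supp(c(u)) = ∅`. -/
theorem stmt15 {K : Type} [Field K] {n r : ℕ} (μs : Fin r → Finset (Fin n))
    (hlq : LinearQuotients K μs)
    (ν : Finset (Fin n)) (j : Fin r) (hg : IsDecomp K μs ν j) :
    μs j ⊆ ν ∧ setIdx K μs j ∩ ↑(ν \ μs j) = ∅ := by
  obtain ⟨h1, h2⟩ := hg
  have key : ∀ (i : Fin r), μs i ⊆ ν → ¬ i < j := by
    intro i hiν hlt
    refine h2 i hlt ?_
    refine Ideal.span_mono ?_ (eMon_mem_span_of_subset hiν)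
    rintro v rfl
    exact ⟨i, le_refl i, rfl⟩
  have hsub : μs j ⊆ ν := by
    rw [Iupto] at h1
    obtain ⟨i, hij, hiν⟩ := exists_subset_of_mem_span μs (fun i => i ≤ j) h1
    rcases lt_or_eq_of_le hij with hlt | heq
    · exact absurd hlt (key i hiν)
    · exact heq ▸ hiν
  refine ⟨hsub, ?_⟩
  rw [Set.eq_empty_iff_forall_notMem]
  rintro k ⟨hk1, hk2⟩
  rw [Finset.mem_coe, Finset.mem_sdiff] at hk2
  obtain ⟨hkν, hkμ⟩ := hk2
  replace hk1 : e K k * eMon K (μs j) ∈ Ibelow K μs j := hk1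
  have hperm : ((insert k (μs j)).sort (· ≤ ·)).Perm (k :: (μs j).sort (· ≤ ·)) := by
    rw [← Multiset.coe_eq_coe]
    rw [Finset.sort_eq, ← Multiset.cons_coe, Finset.sort_eq]
    rw [Finset.insert_val, Multiset.ndinsert_of_notMem hkμ]
  obtain ⟨c, hc⟩ := prod_perm (K := K) hperm
  have hmem : eMon K (insert k (μs j)) ∈ Ibelow K μs j := by
    rw [eMon, hc]
    simp only [List.map_cons, List.prod_cons]
    rw [Algebra.smul_def]
    exact Ideal.mul_mem_left _ _ hk1
  rw [Ibelow] at hmem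
  obtain ⟨i, hij, hsubi⟩ := exists_subset_of_mem_span μs (fun i => i < j) hmem
  exact key i (hsubi.trans (Finset.insert_subset hkν hsub)) hij
end

section
/- Let I be a monomial ideal of E with linear quotients and decomposition function g. For monomials u, v ∈ E with supp(u) ∩ supp(v) = ∅ and u ∈ M(I), one has g(u·v) = g(u) if and only if set(g(u)) ∩ supp(v) = ∅. -/
open ExteriorAlgebra

namespace Aux17

variable {K : Type} [Field K] {n : ℕ}

/-- product of a list of basis vectors -/
noncomputable def eL (K : Type) [Field K] {n : ℕ} (L : List (Fin n)) :
    ExteriorAlgebra K (Fin n → K) :=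
  (L.map (e K)).prod

@[simp] lemma eL_nil : eL K ([] : List (Fin n)) = 1 := rfl
@[simp] lemma eL_cons (k : Fin n) (L : List (Fin n)) :
    eL K (k :: L) = e K k * eL K L := by simp [eL]

lemma eMon_def (μ : Finset (Fin n)) : eMon K μ = eL K (μ.sort (· ≤ ·)) := rfl

lemma eL_append (L₁ L₂ : List (Fin n)) : eL K (L₁ ++ L₂) = eL K L₁ * eL K L₂ := by
  simp [eL]

lemma e_sq (k : Fin n) : e K k * e K k = 0 := ι_sq_zero _

lemma e_anticomm (i j : Fin n) : e K i * e K j = -(e K j * e K i) := by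
  have h : e K i * e K j + e K j * e K i = 0 :=
    ι_add_mul_swap (Pi.single i 1) (Pi.single j 1)
  exact eq_neg_of_add_eq_zero_left h

def IsSign (c : K) : Prop := c = 1 ∨ c = -1

lemma IsSign.one : IsSign (1 : K) := Or.inl rfl
lemma IsSign.neg_one : IsSign (-1 : K) := Or.inr rfl
lemma IsSign.mul {c d : K} (hc : IsSign c) (hd : IsSign d) : IsSign (c * d) := by
  rcases hc with rfl | rfl <;> rcases hd with rfl | rfl <;> simp [IsSign]
lemma IsSign.ne_zero {c : K} (hc : IsSign c) : c ≠ 0 := by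
  rcases hc with rfl | rfl <;> simp
lemma IsSign.inv {c : K} (hc : IsSign c) : IsSign c⁻¹ := by
  rcases hc with rfl | rfl <;> simp [IsSign, inv_neg]


lemma eL_perm {L₁ L₂ : List (Fin n)} (h : L₁.Perm L₂) :
    ∃ c : K, IsSign c ∧ eL K L₁ = c • eL K L₂ := by
  induction h with
  | nil => exact ⟨1, IsSign.one, by simp⟩
  | cons a h ih =>
    obtain ⟨c, hc, he⟩ := ih
    exact ⟨c, hc, by simp [he, mul_smul_comm]⟩
  | swap a b l =>
    refine ⟨-1, IsSign.neg_one, ?_⟩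
    simp only [eL_cons, ← mul_assoc, e_anticomm b a]
    simp
  | trans h₁ h₂ ih₁ ih₂ =>
    obtain ⟨c, hc, hce⟩ := ih₁
    obtain ⟨d, hd, hde⟩ := ih₂
    exact ⟨c * d, hc.mul hd, by rw [hce, hde, smul_smul]⟩

lemma eL_eq_zero_of_not_nodup {L : List (Fin n)} (h : ¬ L.Nodup) : eL K L = 0 := by
  rw [List.nodup_iff_count_le_one] at h
  push_neg at h
  obtain ⟨k, hk⟩ := h
  have hk1 : k ∈ L := by
    rw [← List.count_pos_iff]
    omega
  have hk2 : k ∈ L.erase k := by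
    rw [← List.count_pos_iff, List.count_erase_self]
    omega
  have p1 : L.Perm (k :: L.erase k) := List.perm_cons_erase hk1
  have p2 : (L.erase k).Perm (k :: (L.erase k).erase k) := List.perm_cons_erase hk2
  obtain ⟨c, hc, hce⟩ := eL_perm (K := K) (p1.trans (p2.cons k))
  rw [hce, eL_cons, eL_cons, ← mul_assoc, e_sq, zero_mul, smul_zero]

lemma eL_sort_perm {L : List (Fin n)} (hL : L.Nodup) :
    L.Perm (L.toFinset.sort (· ≤ ·)) := by
  rw [← Multiset.coe_eq_coe, Finset.sort_eq]
  show (L : Multiset (Fin n)) = (Multiset.toFinset (L : Multiset (Fin n))).val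
  rw [Multiset.toFinset_val]
  exact (Multiset.dedup_eq_self.mpr ((Multiset.coe_nodup).mpr hL)).symm

/-- key product lemma -/
lemma eMon_mul_eMon {σ τ : Finset (Fin n)} (h : σ ∩ τ = ∅) :
    ∃ c : K, IsSign c ∧ eMon K σ * eMon K τ = c • eMon K (σ ∪ τ) := by
  have hnd : (σ.sort (· ≤ ·) ++ τ.sort (· ≤ ·)).Nodup := by
    rw [List.nodup_append]
    refine ⟨Finset.sort_nodup _ _, Finset.sort_nodup _ _, ?_⟩
    intro a ha b hb hab
    subst hab
    rw [Finset.mem_sort] at ha hb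
    exact Finset.notMem_empty a (h ▸ Finset.mem_inter.mpr ⟨ha, hb⟩)
  have htf : (σ.sort (· ≤ ·) ++ τ.sort (· ≤ ·)).toFinset = σ ∪ τ := by
    simp [Finset.sort_toFinset]
  obtain ⟨c, hc, hce⟩ := eL_perm (K := K) (htf ▸ eL_sort_perm hnd)
  exact ⟨c, hc, by rw [eMon_def, eMon_def, ← eL_append, hce, eMon_def]⟩

lemma eMon_mul_eMon_of_ne {σ τ : Finset (Fin n)} (h : σ ∩ τ ≠ ∅) :
    eMon K σ * eMon K τ = (0 : ExteriorAlgebra K (Fin n → K)) := by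
  rw [eMon_def, eMon_def, ← eL_append]
  apply eL_eq_zero_of_not_nodup
  rw [List.nodup_append]
  push_neg
  intro _ _
  obtain ⟨a, ha⟩ := Finset.nonempty_iff_ne_empty.mpr h
  rw [Finset.mem_inter] at ha
  exact ⟨a, (Finset.mem_sort _).mpr ha.1, a, (Finset.mem_sort _).mpr ha.2, rfl⟩


/-- contraction by the `k`-th coordinate functional -/
noncomputable def D (k : Fin n) :
    ExteriorAlgebra K (Fin n → K) →ₗ[K] ExteriorAlgebra K (Fin n → K) :=
  CliffordAlgebra.contractLeft (Q := (0 : QuadraticForm K (Fin n → K)))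
    (LinearMap.proj k)

@[simp] lemma D_one (k : Fin n) : D (K := K) k 1 = 0 :=
  CliffordAlgebra.contractLeft_one _ _

lemma D_e_mul (k a : Fin n) (x : ExteriorAlgebra K (Fin n → K)) :
    D k (e K a * x) = (if k = a then x else 0) - e K a * D k x := by
  have h := CliffordAlgebra.contractLeft_ι_mul (Q := (0 : QuadraticForm K (Fin n → K)))
    (d := LinearMap.proj k) (Pi.single a (1:K)) x
  simpa [D, e, Pi.single_apply] using h

lemma D_eL_not_mem {k : Fin n} {L : List (Fin n)} (h : k ∉ L) :
    D k (eL K L) = 0 := by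
  induction L with
  | nil => simp
  | cons a L ih =>
    have hak : k ≠ a := fun hh => h (hh ▸ List.mem_cons_self)
    have hk : k ∉ L := fun hh => h (List.mem_cons_of_mem a hh)
    rw [eL_cons, D_e_mul, if_neg hak, ih hk, mul_zero, sub_zero]

lemma D_eL_mem {k : Fin n} {L : List (Fin n)} (hnd : L.Nodup) (h : k ∈ L) :
    ∃ c : K, IsSign c ∧ D k (eL K L) = c • eL K (L.erase k) := by
  induction L with
  | nil => simp at h
  | cons a L ih =>
    rcases List.nodup_cons.mp hnd with ⟨haL, hLnd⟩
    by_cases hak : a = k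
    · subst hak
      refine ⟨1, IsSign.one, ?_⟩
      rw [eL_cons, D_e_mul, if_pos rfl, D_eL_not_mem haL, mul_zero, sub_zero,
        List.erase_cons_head, one_smul]
    · have hkL : k ∈ L := by
        rcases List.mem_cons.mp h with h' | h'
        · exact absurd h'.symm hak
        · exact h'
      obtain ⟨c, hc, hce⟩ := ih hLnd hkL
      refine ⟨-c, by rcases hc with rfl | rfl <;> simp [IsSign], ?_⟩
      have hka : k ≠ a := fun hh => hak hh.symm
      rw [eL_cons, D_e_mul, if_neg hka, hce, List.erase_cons_tail, eL_cons]
      · rw [zero_sub, mul_smul_comm, ← neg_smul]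
      · simp [hak]

lemma sort_erase_perm (τ : Finset (Fin n)) (k : Fin n) :
    ((τ.sort (· ≤ ·)).erase k).Perm ((τ.erase k).sort (· ≤ ·)) := by
  rw [← Multiset.coe_eq_coe, Finset.sort_eq, ← Multiset.coe_erase,
    Finset.sort_eq, Finset.erase_val]

lemma D_eMon (k : Fin n) (τ : Finset (Fin n)) :
    ∃ c : K, IsSign c ∧
      D k (eMon K τ) = if k ∈ τ then c • eMon K (τ.erase k) else 0 := by
  by_cases hk : k ∈ τ
  · obtain ⟨c, hc, hce⟩ := D_eL_mem (K := K) (Finset.sort_nodup (r := (· ≤ ·)) (s := τ))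
      ((Finset.mem_sort (r := (· ≤ ·))).mpr hk)
    obtain ⟨d, hd, hde⟩ := eL_perm (K := K) (sort_erase_perm τ k)
    exact ⟨c * d, hc.mul hd, by
      rw [if_pos hk, eMon_def, hce, hde, smul_smul, eMon_def]⟩
  · exact ⟨1, IsSign.one, by
      rw [if_neg hk, eMon_def,
        D_eL_not_mem (fun hh => hk ((Finset.mem_sort (r := (· ≤ ·))).mp hh))]⟩


noncomputable def phiL : List (Fin n) → (ExteriorAlgebra K (Fin n → K) →ₗ[K] ExteriorAlgebra K (Fin n → K))
  | [] => LinearMap.id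
  | k :: L => (phiL L).comp (D k)

lemma phiL_eMon {L : List (Fin n)} (hnd : L.Nodup) (τ : Finset (Fin n)) :
    ∃ c : K, IsSign c ∧
      phiL L (eMon K τ) = if L.toFinset ⊆ τ then c • eMon K (τ \ L.toFinset) else 0 := by
  induction L generalizing τ with
  | nil => exact ⟨1, IsSign.one, by simp [phiL]⟩
  | cons k L ih =>
    rcases List.nodup_cons.mp hnd with ⟨hkL, hL⟩
    obtain ⟨c, hc, hce⟩ := D_eMon (K := K) k τ
    have happ : phiL (k :: L) (eMon K τ) = phiL L (D k (eMon K τ)) := rfl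
    by_cases hk : k ∈ τ
    · obtain ⟨d, hd, hde⟩ := ih hL (τ.erase k)
      refine ⟨c * d, hc.mul hd, ?_⟩
      rw [happ, hce, if_pos hk, map_smul, hde]
      have hset : τ.erase k \ L.toFinset = τ \ (k :: L).toFinset := by
        ext x
        simp only [List.toFinset_cons, Finset.mem_sdiff, Finset.mem_erase,
          Finset.mem_insert]
        tauto
      by_cases hsub : L.toFinset ⊆ τ.erase k
      · rw [if_pos hsub, if_pos, smul_smul, hset]
        rw [List.toFinset_cons, Finset.insert_subset_iff]
        exact ⟨hk, ((Finset.subset_erase).mp hsub).1⟩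
      · rw [if_neg hsub, if_neg, smul_zero]
        rw [List.toFinset_cons, Finset.insert_subset_iff]
        rintro ⟨-, hsub'⟩
        exact hsub ((Finset.subset_erase).mpr ⟨hsub', by simpa using hkL⟩)
    · refine ⟨1, IsSign.one, ?_⟩
      rw [happ, hce, if_neg hk, map_zero, if_neg]
      rw [List.toFinset_cons, Finset.insert_subset_iff]
      rintro ⟨hk', -⟩
      exact hk hk'

lemma algebraMapInv_e (k : Fin n) : algebraMapInv (e K k) = 0 := by
  rw [e, ExteriorAlgebra.algebraMapInv, ExteriorAlgebra.lift_ι_apply]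
  rfl

lemma algebraMapInv_eMon_ne (σ : Finset (Fin n)) (hσ : σ ≠ ∅) :
    algebraMapInv (eMon K σ) = 0 := by
  rw [eMon_def]
  rcases hL : σ.sort (· ≤ ·) with _ | ⟨a, L⟩
  · exfalso
    apply hσ
    rw [← Finset.sort_toFinset (r := (· ≤ ·)) (s := σ), hL]
    rfl
  · rw [eL_cons, map_mul, algebraMapInv_e, zero_mul]

@[simp] lemma eMon_empty : eMon K (∅ : Finset (Fin n)) = 1 := by
  rw [eMon_def, Finset.sort_empty, eL_nil]

lemma eMon_linearIndependent :
    LinearIndependent K (fun τ : Finset (Fin n) => eMon K τ) := by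
  rw [Fintype.linearIndependent_iff]
  intro g hg ν
  set Φ : ExteriorAlgebra K (Fin n → K) →ₗ[K] K :=
    (ExteriorAlgebra.algebraMapInv).toLinearMap.comp (phiL (ν.sort (· ≤ ·))) with hΦ
  have hsnd := Finset.sort_nodup (r := (· ≤ ·)) (s := ν)
  have hstf := Finset.sort_toFinset (r := (· ≤ ·)) (s := ν)
  have h0 : ∀ τ : Finset (Fin n), τ ≠ ν → Φ (eMon K τ) = 0 := by
    intro τ hτ
    obtain ⟨c, hc, hce⟩ := phiL_eMon (K := K) hsnd τ
    rw [hΦ, LinearMap.comp_apply, hce, hstf]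
    by_cases hsub : ν ⊆ τ
    · rw [if_pos hsub]
      have hne : τ \ ν ≠ ∅ := by
        intro hh
        exact hτ (Finset.Subset.antisymm (by
          intro x hx
          by_contra hxν
          exact Finset.notMem_empty x (hh ▸ Finset.mem_sdiff.mpr ⟨hx, hxν⟩)) hsub)
      rw [map_smul, AlgHom.toLinearMap_apply, algebraMapInv_eMon_ne _ hne, smul_zero]
    · rw [if_neg hsub, map_zero]
  obtain ⟨c, hc, hce⟩ := phiL_eMon (K := K) hsnd ν
  have h1 : Φ (eMon K ν) = c := by
    rw [hΦ, LinearMap.comp_apply, hce, hstf, if_pos (Finset.Subset.refl ν),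
      Finset.sdiff_self, eMon_empty, map_smul, AlgHom.toLinearMap_apply, map_one,
      smul_eq_mul, mul_one]
  have := congrArg Φ hg
  rw [map_sum, map_zero] at this
  rw [Finset.sum_eq_single_of_mem ν (Finset.mem_univ ν)
    (fun τ _ hτ => by rw [map_smul, h0 τ hτ, smul_zero])] at this
  rw [map_smul, h1, smul_eq_mul] at this
  exact (mul_eq_zero.mp this).resolve_right hc.ne_zero


lemma e_eq_eMon (k : Fin n) : e K k = eMon K {k} := by
  rw [eMon_def, Finset.sort_singleton]
  simp

/-- the span of all monomials -/
noncomputable def WAll (K : Type) [Field K] (n : ℕ) :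
    Submodule K (ExteriorAlgebra K (Fin n → K)) :=
  Submodule.span K (Set.range (fun τ : Finset (Fin n) => eMon K τ))

lemma eMon_mul_mem_span (σ τ : Finset (Fin n)) : eMon K σ * eMon K τ ∈ WAll K n := by
  by_cases h : σ ∩ τ = ∅
  · obtain ⟨c, _, hce⟩ := eMon_mul_eMon (K := K) h
    rw [hce]
    exact Submodule.smul_mem _ _ (Submodule.subset_span ⟨σ ∪ τ, rfl⟩)
  · rw [eMon_mul_eMon_of_ne h]
    exact zero_mem _

lemma mem_span_eMon (x : ExteriorAlgebra K (Fin n → K)) : x ∈ WAll K n := by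
  induction x using ExteriorAlgebra.induction with
  | algebraMap r =>
    rw [Algebra.algebraMap_eq_smul_one]
    exact Submodule.smul_mem _ _ (Submodule.subset_span ⟨∅, eMon_empty⟩)
  | ι x =>
    have hx : ι K x = ∑ i : Fin n, x i • e K i := by
      have h1 : x = ∑ i : Fin n, x i • (Pi.single i (1:K) : Fin n → K) := by
        ext j
        simp [Pi.single_apply]
      conv_lhs => rw [h1]
      rw [map_sum]
      simp [e]
    rw [hx]
    exact Submodule.sum_mem _ fun i _ => Submodule.smul_mem _ _
      (Submodule.subset_span ⟨{i}, (e_eq_eMon i).symm⟩)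
  | mul a b ha hb =>
    have h2 : WAll K n * WAll K n ≤ WAll K n := by
      rw [WAll, Submodule.span_mul_span]
      apply Submodule.span_le.mpr
      rintro v hv
      rw [Set.mem_mul] at hv
      obtain ⟨a', ⟨σ, rfl⟩, b', ⟨τ, rfl⟩, rfl⟩ := hv
      exact eMon_mul_mem_span σ τ
    exact h2 (Submodule.mul_mem_mul ha hb)
  | add a b ha hb => exact add_mem ha hb

/-- the monomial K-span associated to a set of generators -/
noncomputable def WUp (K : Type) [Field K] {n : ℕ} (A : Set (Finset (Fin n))) :
    Submodule K (ExteriorAlgebra K (Fin n → K)) :=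
  Submodule.span K ((fun τ : Finset (Fin n) => eMon K τ) '' {τ | ∃ σ ∈ A, σ ⊆ τ})

lemma eMon_mul_mem_WUp (A : Set (Finset (Fin n))) (σ : Finset (Fin n))
    {x : ExteriorAlgebra K (Fin n → K)} (hx : x ∈ WUp K A) :
    eMon K σ * x ∈ WUp K A := by
  induction hx using Submodule.span_induction with
  | mem v hv =>
    obtain ⟨τ, ⟨σ', hσ'A, hσ'τ⟩, rfl⟩ := hv
    by_cases h : σ ∩ τ = ∅
    · obtain ⟨c, _, hce⟩ := eMon_mul_eMon (K := K) h
      rw [hce]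
      exact Submodule.smul_mem _ _ (Submodule.subset_span
        ⟨σ ∪ τ, ⟨σ', hσ'A, hσ'τ.trans Finset.subset_union_right⟩, rfl⟩)
    · rw [eMon_mul_eMon_of_ne h]
      exact zero_mem _
  | zero => rw [mul_zero]; exact zero_mem _
  | add y z _ _ hy hz => rw [mul_add]; exact add_mem hy hz
  | smul c y _ hy => rw [mul_smul_comm]; exact Submodule.smul_mem _ _ hy

lemma mul_mem_WUp (A : Set (Finset (Fin n))) (c : ExteriorAlgebra K (Fin n → K))
    {x : ExteriorAlgebra K (Fin n → K)} (hx : x ∈ WUp K A) :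
    c * x ∈ WUp K A := by
  have hc := mem_span_eMon (K := K) c
  induction hc using Submodule.span_induction with
  | mem v hv =>
    obtain ⟨σ, rfl⟩ := hv
    exact eMon_mul_mem_WUp A σ hx
  | zero => rw [zero_mul]; exact zero_mem _
  | add y z _ _ hy hz => rw [add_mul]; exact add_mem hy hz
  | smul d y _ hy => rw [smul_mul_assoc]; exact Submodule.smul_mem _ _ hy

lemma ksmul_mem_ideal {I : Ideal (ExteriorAlgebra K (Fin n → K))} (c : K)
    {x : ExteriorAlgebra K (Fin n → K)} (h : x ∈ I) : c • x ∈ I := by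
  rw [Algebra.smul_def]
  exact I.mul_mem_left _ h

lemma eMon_mem_idealSpan {A : Set (Finset (Fin n))} {ν : Finset (Fin n)}
    (h : ∃ σ ∈ A, σ ⊆ ν) :
    eMon K ν ∈ Ideal.span {v | ∃ σ ∈ A, v = eMon K σ} := by
  obtain ⟨σ, hσA, hσν⟩ := h
  have hd : (ν \ σ) ∩ σ = ∅ := Finset.sdiff_inter_self σ ν
  obtain ⟨c, hc, hce⟩ := eMon_mul_eMon (K := K) hd
  rw [Finset.sdiff_union_of_subset hσν] at hce
  have h1 : eMon K (ν \ σ) * eMon K σ ∈ Ideal.span {v | ∃ σ ∈ A, v = eMon K σ} :=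
    Ideal.mul_mem_left _ (eMon K (ν \ σ)) (Ideal.subset_span ⟨σ, hσA, rfl⟩)
  have h2 : eMon K ν = c⁻¹ • (eMon K (ν \ σ) * eMon K σ) := by
    rw [hce, smul_smul, inv_mul_cancel₀ hc.ne_zero, one_smul]
  rw [h2]
  exact ksmul_mem_ideal _ h1

lemma idealSpan_le_WUp (A : Set (Finset (Fin n)))
    {x : ExteriorAlgebra K (Fin n → K)}
    (hx : x ∈ Ideal.span {v | ∃ σ ∈ A, v = eMon K σ}) : x ∈ WUp K A := by
  induction hx using Submodule.span_induction with
  | mem v hv =>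
    obtain ⟨σ, hσA, rfl⟩ := hv
    exact Submodule.subset_span ⟨σ, ⟨σ, hσA, Finset.Subset.refl σ⟩, rfl⟩
  | zero => exact zero_mem _
  | add y z _ _ hy hz => exact add_mem hy hz
  | smul c y _ hy =>
    rw [smul_eq_mul]
    exact mul_mem_WUp A c hy

theorem eMon_mem_idealSpan_iff (A : Set (Finset (Fin n))) (ν : Finset (Fin n)) :
    eMon K ν ∈ Ideal.span {v | ∃ σ ∈ A, v = eMon K σ} ↔ ∃ σ ∈ A, σ ⊆ ν := by
  constructor
  · intro h
    by_contra hne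
    have h1 : eMon K ν ∈ WUp K A := idealSpan_le_WUp A h
    have h2 : ν ∉ {τ : Finset (Fin n) | ∃ σ ∈ A, σ ⊆ τ} := hne
    exact (eMon_linearIndependent (K := K) (n := n)).notMem_span_image h2 h1
  · exact eMon_mem_idealSpan



variable {r : ℕ}

lemma ksmul_mem_ideal_iff {I : Ideal (ExteriorAlgebra K (Fin n → K))} {c : K}
    (hc : c ≠ 0) {x : ExteriorAlgebra K (Fin n → K)} : c • x ∈ I ↔ x ∈ I := by
  constructor
  · intro h
    have h2 := ksmul_mem_ideal c⁻¹ h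
    rwa [smul_smul, inv_mul_cancel₀ hc, one_smul] at h2
  · exact ksmul_mem_ideal c

lemma mem_Iupto_iff (μs : Fin r → Finset (Fin n)) (j : Fin r) (ν : Finset (Fin n)) :
    eMon K ν ∈ Iupto K μs j ↔ ∃ i, i ≤ j ∧ μs i ⊆ ν := by
  have hset : {v | ∃ i, i ≤ j ∧ v = eMon K (μs i)}
      = {v | ∃ σ ∈ (μs '' {i | i ≤ j}), v = eMon K σ} := by
    ext v
    constructor
    · rintro ⟨i, hi, rfl⟩
      exact ⟨μs i, ⟨i, hi, rfl⟩, rfl⟩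
    · rintro ⟨σ, ⟨i, hi, rfl⟩, rfl⟩
      exact ⟨i, hi, rfl⟩
  rw [Iupto, hset, eMon_mem_idealSpan_iff]
  constructor
  · rintro ⟨σ, ⟨i, hi, rfl⟩, hsub⟩
    exact ⟨i, hi, hsub⟩
  · rintro ⟨i, hi, hsub⟩
    exact ⟨μs i, ⟨i, hi, rfl⟩, hsub⟩

lemma mem_Ibelow_iff (μs : Fin r → Finset (Fin n)) (j : Fin r) (ν : Finset (Fin n)) :
    eMon K ν ∈ Ibelow K μs j ↔ ∃ i, i < j ∧ μs i ⊆ ν := by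
  have hset : {v | ∃ i, i < j ∧ v = eMon K (μs i)}
      = {v | ∃ σ ∈ (μs '' {i | i < j}), v = eMon K σ} := by
    ext v
    constructor
    · rintro ⟨i, hi, rfl⟩
      exact ⟨μs i, ⟨i, hi, rfl⟩, rfl⟩
    · rintro ⟨σ, ⟨i, hi, rfl⟩, rfl⟩
      exact ⟨i, hi, rfl⟩
  rw [Ibelow, hset, eMon_mem_idealSpan_iff]
  constructor
  · rintro ⟨σ, ⟨i, hi, rfl⟩, hsub⟩
    exact ⟨i, hi, hsub⟩
  · rintro ⟨i, hi, hsub⟩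
    exact ⟨μs i, ⟨i, hi, rfl⟩, hsub⟩

lemma eMon_mem_varSpan_iff (S : Finset (Fin n)) (τ : Finset (Fin n)) :
    eMon K τ ∈ Ideal.span {v | ∃ k ∈ S, v = e K k} ↔ ∃ k ∈ S, k ∈ τ := by
  have hset : {v | ∃ k ∈ S, v = e K k}
      = {v | ∃ σ ∈ ((fun k => ({k} : Finset (Fin n))) '' ↑S), v = eMon K σ} := by
    ext v
    constructor
    · rintro ⟨k, hk, rfl⟩
      exact ⟨{k}, ⟨k, hk, rfl⟩, e_eq_eMon k⟩
    · rintro ⟨σ, ⟨k, hk, rfl⟩, rfl⟩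
      exact ⟨k, hk, (e_eq_eMon k).symm⟩
  rw [hset, eMon_mem_idealSpan_iff]
  constructor
  · rintro ⟨σ, ⟨k, hk, rfl⟩, hsub⟩
    exact ⟨k, hk, hsub (Finset.mem_singleton_self k)⟩
  · rintro ⟨k, hk, hkτ⟩
    exact ⟨{k}, ⟨k, hk, rfl⟩, Finset.singleton_subset_iff.mpr hkτ⟩

lemma decomp_subset {μs : Fin r → Finset (Fin n)} {ν : Finset (Fin n)} {j : Fin r}
    (hj : IsDecomp K μs ν j) : μs j ⊆ ν := by
  obtain ⟨i, hij, hsub⟩ := (mem_Iupto_iff μs j ν).mp hj.1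
  rcases lt_or_eq_of_le hij with hlt | rfl
  · exact absurd ((mem_Iupto_iff μs i ν).mpr ⟨i, le_refl i, hsub⟩) (hj.2 i hlt)
  · exact hsub

end Aux17

/-- Let `I` have linear quotients with decomposition function `g`. For
monomials `u = e_ν ∈ M(I)` and `v = e_ρ` with `supp(u) ∩ supp(v) = ∅`, one has
`g(u·v) = g(u)` if and only if `set(g(u)) ∩ supp(v) = ∅`. Here `g(u) = u_j` and
`g(u·v) = u_{j'}` for the least indices `j`, `j'` with `e_ν ∈ (u_1,…,u_j)` and
`e_{ν∪ρ} ∈ (u_1,…,u_{j'})`. -/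

theorem stmt17 {K : Type} [Field K] {n r : ℕ} (μs : Fin r → Finset (Fin n))
    (hlq : LinearQuotients K μs)
    (ν ρ : Finset (Fin n)) (hdisj : ν ∩ ρ = ∅)
    (j j' : Fin r) (hj : IsDecomp K μs ν j) (hj' : IsDecomp K μs (ν ∪ ρ) j') :
    μs j' = μs j ↔ setIdx K μs j ∩ ↑ρ = ∅ := by
  classical
  obtain ⟨S, hS⟩ := hlq j
  have hcolon : ∀ f : ExteriorAlgebra K (Fin n → K),
      f * eMon K (μs j) ∈ Ibelow K μs j ↔
        f ∈ Ideal.span {v | ∃ k ∈ S, v = e K k} := by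
    intro f
    have h := Set.ext_iff.mp hS f
    simpa using h
  have hvar : ∀ k : Fin n, (e K k * eMon K (μs j) ∈ Ibelow K μs j) ↔ k ∈ S := by
    intro k
    rw [hcolon (e K k), Aux17.e_eq_eMon, Aux17.eMon_mem_varSpan_iff]
    simp
  have hmoncolon : ∀ τ : Finset (Fin n),
      (eMon K τ * eMon K (μs j) ∈ Ibelow K μs j) ↔ ∃ k ∈ S, k ∈ τ := by
    intro τ
    rw [hcolon (eMon K τ), Aux17.eMon_mem_varSpan_iff]
  have hsetIdx : setIdx K μs j = ↑S := Set.ext fun k => by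
    rw [setIdx, Set.mem_setOf_eq, hvar k, Finset.mem_coe]
  have hsubj : μs j ⊆ ν := Aux17.decomp_subset hj
  have hmemj : eMon K (ν ∪ ρ) ∈ Iupto K μs j :=
    (Aux17.mem_Iupto_iff μs j (ν ∪ ρ)).mpr
      ⟨j, le_refl j, hsubj.trans Finset.subset_union_left⟩
  have hj'le : j' ≤ j := by
    by_contra hlt
    exact hj'.2 j (not_le.mp hlt) hmemj
  -- key step : a variable k ∈ S with k ∉ μs j yields i < j with μs i ⊆ {k} ∪ μs j
  have hkey : ∀ k : Fin n, k ∈ S → k ∉ μs j →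
      ∃ i, i < j ∧ μs i ⊆ {k} ∪ μs j := by
    intro k hkS hkj
    have hk' := (hvar k).mpr hkS
    rw [Aux17.e_eq_eMon] at hk'
    have hd : ({k} : Finset (Fin n)) ∩ μs j = ∅ := by
      simp [Finset.singleton_inter_of_notMem hkj]
    obtain ⟨c, hc, hce⟩ := Aux17.eMon_mul_eMon (K := K) hd
    rw [hce] at hk'
    exact (Aux17.mem_Ibelow_iff μs j _).mp
      ((Aux17.ksmul_mem_ideal_iff hc.ne_zero).mp hk')
  constructor
  · intro heq
    have hjj' : j' = j := by
      refine le_antisymm hj'le ?_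
      by_contra hlt
      exact hj.2 j' (not_le.mp hlt)
        ((Aux17.mem_Iupto_iff μs j' ν).mpr ⟨j', le_refl j', heq ▸ hsubj⟩)
    rw [hsetIdx]
    rw [Set.eq_empty_iff_forall_notMem]
    rintro k ⟨hkS, hkρ⟩
    rw [Finset.mem_coe] at hkS hkρ
    by_cases hkj : k ∈ μs j
    · exact Finset.eq_empty_iff_forall_notMem.mp hdisj k
        (Finset.mem_inter.mpr ⟨hsubj hkj, hkρ⟩)
    · obtain ⟨i, hij, hsub⟩ := hkey k hkS hkj
      have hsub2 : μs i ⊆ ν ∪ ρ := hsub.trans (by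
        intro x hx
        rcases Finset.mem_union.mp hx with hx | hx
        · exact Finset.mem_union_right _ (Finset.mem_singleton.mp hx ▸ hkρ)
        · exact Finset.mem_union_left _ (hsubj hx))
      exact hj'.2 i (hjj' ▸ hij)
        ((Aux17.mem_Iupto_iff μs i (ν ∪ ρ)).mpr ⟨i, le_refl i, hsub2⟩)
  · intro hset
    rcases lt_or_eq_of_le hj'le with hlt | rfl
    · exfalso
      have hSρ : ∀ k, k ∈ S → k ∉ ρ := by
        intro k hkS hkρ
        have := Set.eq_empty_iff_forall_notMem.mp hset k
        rw [hsetIdx] at this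
        exact this ⟨Finset.mem_coe.mpr hkS, Finset.mem_coe.mpr hkρ⟩
      -- eMon (ν∪ρ) lies in Ibelow j
      have hbelow : eMon K (ν ∪ ρ) ∈ Ibelow K μs j := by
        obtain ⟨i, hij', hsub⟩ := (Aux17.mem_Iupto_iff μs j' (ν ∪ ρ)).mp hj'.1
        exact (Aux17.mem_Ibelow_iff μs j (ν ∪ ρ)).mpr
          ⟨i, lt_of_le_of_lt hij' hlt, hsub⟩
      -- so eMon ((ν∪ρ)\μs j) is in the colon ideal
      have hd : ((ν ∪ ρ) \ μs j) ∩ μs j = ∅ := Finset.sdiff_inter_self _ _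
      obtain ⟨c, hc, hce⟩ := Aux17.eMon_mul_eMon (K := K) hd
      rw [Finset.sdiff_union_of_subset (hsubj.trans Finset.subset_union_left)] at hce
      have hcmem : eMon K ((ν ∪ ρ) \ μs j) * eMon K (μs j) ∈ Ibelow K μs j := by
        rw [hce]
        exact Aux17.ksmul_mem_ideal c hbelow
      obtain ⟨k, hkS, hkτ⟩ := (hmoncolon _).mp hcmem
      rw [Finset.mem_sdiff] at hkτ
      obtain ⟨hkνρ, hkj⟩ := hkτ
      have hkν : k ∈ ν := by
        rcases Finset.mem_union.mp hkνρ with h | h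
        · exact h
        · exact absurd h (hSρ k hkS)
      obtain ⟨i, hij, hsub⟩ := hkey k hkS hkj
      have hsubν : μs i ⊆ ν := hsub.trans (by
        intro x hx
        rcases Finset.mem_union.mp hx with hx | hx
        · exact Finset.mem_singleton.mp hx ▸ hkν
        · exact hsubj hx)
      exact hj.2 i hij ((Aux17.mem_Iupto_iff μs i ν).mpr ⟨i, le_refl i, hsubν⟩)
    · rfl
end
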